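/- arXiv:2310.12265 — 2 statements merged into one kernel-verified Lean document; each statement's English description precedes it below -/
import Mathlib

section
/- If w ∈ G(m, p, n) satisfies ℓ_R(w) = codimfix(w), and every subset of the multiset of cycle weights of w that sums to 0 (mod p) is a disjoint union of some weights that are 0 (mod p) and some pairs of weights that sum to 0 in ℤ/mℤ, then [id, w]_{ℓ_R} = [id, w]_{cdf}. -/
open Equiv Finset
@[ext]
structure GW (m n : ℕ) where
  perm : Equiv.Perm (Fin n)
  wt : Fin n → ZMod m
namespace GW
variable {m n : ℕ}
instance : Mul (GW m n) :=
  ⟨fun x y => ⟨x.perm * y.perm, fun i => x.wt i + y.wt (x.perm⁻¹ i)⟩⟩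
instance : One (GW m n) := ⟨⟨1, 0⟩⟩
instance : Inv (GW m n) := ⟨fun x => ⟨x.perm⁻¹, fun i => -x.wt (x.perm i)⟩⟩
@[simp] theorem mul_perm (x y : GW m n) : (x * y).perm = x.perm * y.perm := rfl
@[simp] theorem mul_wt (x y : GW m n) (i : Fin n) :
    (x * y).wt i = x.wt i + y.wt (x.perm⁻¹ i) := rfl
@[simp] theorem one_perm : (1 : GW m n).perm = 1 := rfl
@[simp] theorem one_wt (i : Fin n) : (1 : GW m n).wt i = 0 := rfl
@[simp] theorem inv_perm (x : GW m n) : (x⁻¹).perm = x.perm⁻¹ := rfl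
@[simp] theorem inv_wt (x : GW m n) (i : Fin n) : (x⁻¹).wt i = -x.wt (x.perm i) := rfl
private theorem gw_mul_assoc (a b c : GW m n) : a * b * c = a * (b * c) := by
  ext i
  · simp [mul_assoc]
  · simp [mul_inv_rev, add_assoc]
private theorem gw_one_mul (a : GW m n) : 1 * a = a := by ext i <;> simp
private theorem gw_mul_one (a : GW m n) : a * 1 = a := by ext i <;> simp
private theorem gw_inv_mul_cancel (a : GW m n) : a⁻¹ * a = 1 := by ext i <;> simp
instance : Group (GW m n) where
  mul := (· * ·)
  one := 1
  inv := Inv.inv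
  mul_assoc := gw_mul_assoc
  one_mul := gw_one_mul
  mul_one := gw_mul_one
  inv_mul_cancel := gw_inv_mul_cancel
def cycleOf (w : GW m n) (i : Fin n) : Finset (Fin n) :=
  Finset.univ.filter fun j => w.perm.SameCycle i j
def cycles (w : GW m n) : Finset (Finset (Fin n)) :=
  Finset.univ.image fun i => w.cycleOf i
def cycWt (w : GW m n) (C : Finset (Fin n)) : ZMod m := ∑ i ∈ C, w.wt i
def numCycles (w : GW m n) : ℕ := (cycles w).card
def c0 (w : GW m n) : ℕ := ((cycles w).filter fun C => cycWt w C = 0).card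
def codimfix (w : GW m n) : ℕ := n - c0 w
def wtTot (w : GW m n) : ZMod m := ∑ i, w.wt i

-- NEW PIECES BELOW --

/-- The base relation on cycles of `w` induced by `u`: two cycles of `w` are related if
some cycle of `u` meets both of them. -/
def piRelBase (u w : GW m n) (C₁ C₂ : Finset (Fin n)) : Prop :=
  C₁ ∈ cycles w ∧ C₂ ∈ cycles w ∧ ∃ D ∈ cycles u, (D ∩ C₁).Nonempty ∧ (D ∩ C₂).Nonempty

/-- The equivalence relation on the cycles of `w` generated by `piRelBase`. -/
def piRel (u w : GW m n) : Finset (Fin n) → Finset (Fin n) → Prop :=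
  Relation.EqvGen (piRelBase u w)

open Classical in
/-- The part of the partition `Π_u(w)` containing the cycle `C` of `w`. -/
noncomputable def piPart (u w : GW m n) (C : Finset (Fin n)) : Finset (Finset (Fin n)) :=
  (cycles w).filter fun C' => piRel u w C C'

/-- The set partition `Π_u(w)` of the cycles of `w`, as the set of its parts. -/
noncomputable def piParts (u w : GW m n) : Finset (Finset (Finset (Fin n))) :=
  (cycles w).image fun C => piPart u w C

/-- The weight of a collection `B` of cycles: the sum of the weights of its cycles. -/
def partWt (w : GW m n) (B : Finset (Finset (Fin n))) : ZMod m :=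
  ∑ C ∈ B, cycWt w C

open Classical in
/-- The number of parts of `Π_u(w)` of nonzero total weight. -/
noncomputable def piPartsNonzeroWt (u w : GW m n) : ℕ :=
  ((piParts u w).filter fun B => partWt w B ≠ 0).card

/-- The support of a collection of cycles: the union of the cycles' underlying sets. -/
def supp (B : Finset (Finset (Fin n))) : Finset (Fin n) := B.sup id

/-- Restriction of a permutation to an invariant set `A` (junk value `1` if `A` is
not invariant): it agrees with `σ` on `A` and is the identity off `A`. -/
noncomputable def restrictPerm (σ : Equiv.Perm (Fin n)) (A : Finset (Fin n)) :
    Equiv.Perm (Fin n) :=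
  if h : ∀ i, σ i ∈ A ↔ i ∈ A then
    { toFun := fun i => if i ∈ A then σ i else i
      invFun := fun i => if i ∈ A then σ.symm i else i
      left_inv := by
        intro i
        by_cases hi : i ∈ A
        · simp [hi, (h i).mpr hi]
        · simp [hi]
      right_inv := by
        intro j
        by_cases hj : j ∈ A
        · have hs : σ.symm j ∈ A := by
            have h2 := h (σ.symm j)
            rw [Equiv.apply_symm_apply] at h2
            exact h2.mp hj
          simp [hj, hs]
        · simp [hj] }
  else 1


/-- The restriction `x|_A` of `x` to a subset `A` of `{1,…,n}` (stabilized by `x`):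
it agrees with `x` on `A` and acts as the identity, with weight `0`, off `A`. -/
noncomputable def restrict (x : GW m n) (A : Finset (Fin n)) : GW m n :=
  ⟨restrictPerm x.perm A, fun i => if i ∈ A then x.wt i else 0⟩

/-- The cycles of `x` contained in `A`; for `x = y|_A` this gives the cycles of the
restriction of `y` to `A`, viewed as an element of `G(m,1,#A)`. -/
def cyclesIn (x : GW m n) (A : Finset (Fin n)) : Finset (Finset (Fin n)) :=
  (cycles x).filter fun C => C ⊆ A

/-- The monomial matrix representing `w`: the nonzero entry in column `j` sits in row
`w.perm j` and equals `ζ^(a_(w.perm j))`, where `ζ = exp(2πi/m)`. -/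
noncomputable def toMatrix (w : GW m n) : Matrix (Fin n) (Fin n) ℂ :=
  Matrix.of fun i j =>
    if w.perm j = i then Complex.exp (2 * Real.pi * Complex.I * ((w.wt i).val : ℂ) / (m : ℂ))
    else 0

/-- `S` (a set of cycles of `w`) can be partitioned into singletons whose weight is
`0 (mod p)` and pairs of cycles whose weights sum to `0` in `ℤ/mℤ`; encoded by an
involution pairing up the cycles. -/
def PairedUp (p : ℕ) (hpm : p ∣ m) (w : GW m n) (S : Finset (Finset (Fin n))) : Prop :=
  ∃ π : {C // C ∈ S} → {C // C ∈ S}, Function.Involutive π ∧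
    (∀ C, π C = C → ZMod.castHom hpm (ZMod p) (cycWt w C.1) = 0) ∧
    (∀ C, π C ≠ C → cycWt w C.1 + cycWt w (π C).1 = 0)

/-- Membership in `G(m,p,n)`: the total weight is `0 (mod p)`. -/
def Gmem (p : ℕ) (hpm : p ∣ m) (w : GW m n) : Prop :=
  ZMod.castHom hpm (ZMod p) (wtTot w) = 0

/-- A reflection of `G(m,p,n)`: an element of the group whose fixed space has codimension 1. -/
def IsRefl (p : ℕ) (hpm : p ∣ m) (t : GW m n) : Prop :=
  Gmem p hpm t ∧ codimfix t = 1

/-- The reflection length of `w` with respect to the reflections of `G(m,p,n)`. -/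
noncomputable def lR (p : ℕ) (hpm : p ∣ m) (w : GW m n) : ℕ :=
  sInf {k | ∃ l : List (GW m n), (∀ t ∈ l, IsRefl p hpm t) ∧ l.length = k ∧ l.prod = w}

/-- The order `≤_f` determined by a subadditive function `f`. -/
def leF (f : GW m n → ℕ) (x y : GW m n) : Prop := f x + f (x⁻¹ * y) = f y

/-- The interval `[id, w]_f` inside the poset `(G(m,p,n), ≤_f)`. -/
def interval (p : ℕ) (hpm : p ∣ m) (f : GW m n → ℕ) (w : GW m n) : Set (GW m n) :=
  {u | Gmem p hpm u ∧ leF f u w}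

/-- A vector `v ∈ ℂⁿ` is regular for `G(m,p,n)` if it is fixed by no reflection. -/
def IsRegularVec (p : ℕ) (hpm : p ∣ m) (v : Fin n → ℂ) : Prop :=
  ∀ t : GW m n, IsRefl p hpm t → (toMatrix t).mulVec v ≠ v

/-- An element `w ∈ G(m,p,n)` is regular if it has an eigenvector that is a regular vector. -/
def IsRegularElt (p : ℕ) (hpm : p ∣ m) (w : GW m n) : Prop :=
  ∃ v : Fin n → ℂ, v ≠ 0 ∧ (∃ c : ℂ, (toMatrix w).mulVec v = c • v) ∧ IsRegularVec p hpm v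

end GW

set_option linter.unusedSectionVars false
set_option maxHeartbeats 1000000

namespace PermAux
open Equiv.Perm Function
variable {α : Type*} [DecidableEq α] [Fintype α]

lemma sameCycle_iff_nat {σ : Equiv.Perm α} {a b : α} :
    σ.SameCycle a b ↔ ∃ k : ℕ, (σ ^ k) a = b := by
  constructor
  · intro h; obtain ⟨k, _, hk⟩ := h.exists_pow_eq'; exact ⟨k, hk⟩
  · rintro ⟨k, hk⟩; exact ⟨(k : ℤ), by simpa using hk⟩

lemma mem_periodicPts_perm (σ : Equiv.Perm α) (a : α) : a ∈ Function.periodicPts σ := by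
  refine ⟨orderOf σ, orderOf_pos σ, ?_⟩
  show σ^[orderOf σ] a = a
  rw [← Equiv.Perm.coe_pow, pow_orderOf_eq_one]; rfl

lemma minimalPeriod_perm_pos (σ : Equiv.Perm α) (a : α) :
    0 < Function.minimalPeriod σ a :=
  Function.minimalPeriod_pos_of_mem_periodicPts (mem_periodicPts_perm σ a)

lemma pow_minimalPeriod_perm (σ : Equiv.Perm α) (a : α) :
    (σ ^ Function.minimalPeriod σ a) a = a := by
  rw [Equiv.Perm.coe_pow]; exact Function.iterate_minimalPeriod

lemma pow_mod_minimalPeriod_perm (σ : Equiv.Perm α) (a : α) (n : ℕ) :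
    (σ ^ (n % Function.minimalPeriod σ a)) a = (σ ^ n) a := by
  rw [Equiv.Perm.coe_pow, Equiv.Perm.coe_pow]; exact Function.iterate_mod_minimalPeriod_eq

lemma pow_ne_of_lt_minimalPeriod {σ : Equiv.Perm α} {a : α} {t : ℕ} (h0 : 0 < t)
    (ht : t < Function.minimalPeriod σ a) : (σ ^ t) a ≠ a := by
  intro hc
  have : Function.IsPeriodicPt σ t a := by
    show σ^[t] a = a; rw [← Equiv.Perm.coe_pow]; exact hc
  exact absurd (this.minimalPeriod_le h0) (not_le.mpr ht)

lemma iterate_eq_of_agree (σ ρ : Equiv.Perm α) (a : α) (t : ℕ)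
    (h : ∀ s, s < t → ρ ((σ ^ s) a) = σ ((σ ^ s) a)) : (ρ ^ t) a = (σ ^ t) a := by
  induction t with
  | zero => rfl
  | succ t ih =>
    have ih' := ih (fun s hs => h s (hs.trans (Nat.lt_succ_self t)))
    rw [pow_succ' ρ t, pow_succ' σ t, Equiv.Perm.mul_apply, Equiv.Perm.mul_apply, ih',
      h t (Nat.lt_succ_self t)]

lemma sameCycle_of_invariant {ρ : Equiv.Perm α} {S : Set α} (hS : ∀ a ∈ S, ρ a ∈ S)
    {a b : α} (ha : a ∈ S) (h : ρ.SameCycle a b) : b ∈ S := by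
  rw [sameCycle_iff_nat] at h
  obtain ⟨k, rfl⟩ := h
  induction k with
  | zero => exact ha
  | succ k ih => rw [pow_succ' ρ k, Equiv.Perm.mul_apply]; exact hS _ ih

lemma sameCycle_fixed {ρ : Equiv.Perm α} {a : α} (hfix : ρ a = a) {l : α} :
    ρ.SameCycle a l ↔ l = a := by
  constructor
  · intro h
    have := sameCycle_of_invariant (S := {a}) (by simp [hfix]) rfl h
    simpa using this
  · rintro rfl; exact Equiv.Perm.SameCycle.refl _ _

/-- In the "outside" region, `σ * swap i j` has the same cycles as `σ`. -/
lemma sameCycle_mul_swap_outside {σ : Equiv.Perm α} {i j k : α}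
    (hki : ¬σ.SameCycle i k) (hkj : ¬σ.SameCycle j k) (l : α) :
    (σ * Equiv.swap i j).SameCycle k l ↔ σ.SameCycle k l := by
  set ρ := σ * Equiv.swap i j with hρ
  have agree : ∀ n : ℕ, (ρ ^ n) k = (σ ^ n) k := by
    intro n
    refine iterate_eq_of_agree σ ρ k n (fun s _ => ?_)
    have hsk : σ.SameCycle k ((σ ^ s) k) := ⟨(s : ℤ), by simp⟩
    have h1 : (σ ^ s) k ≠ i := fun hc => hki (by rw [← hc] at hki ⊢; exact (hsk.symm))
    have h2 : (σ ^ s) k ≠ j := fun hc => hkj (by rw [← hc] at hkj ⊢; exact (hsk.symm))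
    show σ (Equiv.swap i j ((σ ^ s) k)) = σ ((σ ^ s) k)
    rw [Equiv.swap_apply_of_ne_of_ne h1 h2]
  constructor
  · intro h
    rw [sameCycle_iff_nat] at h
    obtain ⟨n, rfl⟩ := h
    rw [agree n]; exact ⟨(n : ℤ), by simp⟩
  · intro h
    rw [sameCycle_iff_nat] at h
    obtain ⟨n, rfl⟩ := h
    rw [← agree n]; exact ⟨(n : ℤ), by simp⟩

/-- Trajectory lemma for the merge case. -/
lemma merge_traj {σ : Equiv.Perm α} {i j : α} (hdiff : ¬σ.SameCycle i j) :
    ∀ t, 1 ≤ t → t ≤ Function.minimalPeriod σ j →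
      ((σ * Equiv.swap i j) ^ t) i = (σ ^ t) j := by
  set ρ := σ * Equiv.swap i j with hρ
  intro t
  induction t with
  | zero => intro h; omega
  | succ t ih =>
    intro _ hle
    rcases Nat.eq_or_lt_of_le (Nat.one_le_iff_ne_zero.mpr (Nat.succ_ne_zero t)) with h1 | h1
    · -- t + 1 = 1
      have ht0 : t = 0 := by omega
      subst ht0
      show ρ i = σ j
      show σ (Equiv.swap i j i) = σ j
      rw [Equiv.swap_apply_left]
    · have ht1 : 1 ≤ t := by omega
      have ih' := ih ht1 (by omega)
      rw [pow_succ' ρ t, Equiv.Perm.mul_apply, ih']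
      have hne1 : (σ ^ t) j ≠ i := by
        intro hc
        exact hdiff (Equiv.Perm.SameCycle.symm ⟨(t : ℤ), by simpa using hc⟩)
      have hne2 : (σ ^ t) j ≠ j := pow_ne_of_lt_minimalPeriod ht1 (by omega)
      show σ (Equiv.swap i j ((σ ^ t) j)) = (σ ^ (t+1)) j
      rw [Equiv.swap_apply_of_ne_of_ne hne1 hne2, pow_succ' σ t, Equiv.Perm.mul_apply]

lemma merge_reaches {σ : Equiv.Perm α} {i j : α} (hdiff : ¬σ.SameCycle i j) :
    ∀ l, σ.SameCycle j l → (σ * Equiv.swap i j).SameCycle i l := by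
  intro l hl
  set d := Function.minimalPeriod σ j with hd
  have hd0 : 0 < d := minimalPeriod_perm_pos σ j
  rw [sameCycle_iff_nat] at hl
  obtain ⟨n, rfl⟩ := hl
  have key : ∀ t, 1 ≤ t → t ≤ d → (σ * Equiv.swap i j).SameCycle i ((σ ^ t) j) := by
    intro t h1 h2
    exact ⟨(t : ℤ), by rw [← merge_traj hdiff t h1 h2]; simp⟩
  rcases Nat.eq_zero_or_pos (n % d) with h0 | h0
  · have : (σ ^ n) j = j := by
      rw [← pow_mod_minimalPeriod_perm σ j n, ← hd, h0, pow_zero]; rfl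
    rw [this]
    have := key d hd0 le_rfl
    rwa [pow_minimalPeriod_perm σ j] at this
  · have : (σ ^ n) j = (σ ^ (n % d)) j := (pow_mod_minimalPeriod_perm σ j n).symm
    rw [this]
    exact key _ h0 (le_of_lt (Nat.mod_lt _ hd0))

/-- Merge: if `i`, `j` are in different cycles of `σ`, then in `σ * swap i j`
the cycle of `i` is the union. -/
lemma sameCycle_mul_swap_merge {σ : Equiv.Perm α} {i j : α} (hdiff : ¬σ.SameCycle i j) (l : α) :
    (σ * Equiv.swap i j).SameCycle i l ↔ (σ.SameCycle i l ∨ σ.SameCycle j l) := by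
  set ρ := σ * Equiv.swap i j with hρ
  constructor
  · intro h
    refine sameCycle_of_invariant (S := {x | σ.SameCycle i x ∨ σ.SameCycle j x})
      ?_ (Or.inl (Equiv.Perm.SameCycle.refl _ _)) h
    intro a ha
    rcases eq_or_ne a i with rfl | hai
    · right
      have : ρ a = σ j := by
        show σ (Equiv.swap a j a) = σ j; rw [Equiv.swap_apply_left]
      rw [this]; exact ⟨1, by simp⟩
    rcases eq_or_ne a j with rfl | haj
    · left
      have : ρ a = σ i := by
        show σ (Equiv.swap i a a) = σ i; rw [Equiv.swap_apply_right]
      rw [this]; exact ⟨1, by simp⟩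
    · have : ρ a = σ a := by
        show σ (Equiv.swap i j a) = σ a
        rw [Equiv.swap_apply_of_ne_of_ne hai haj]
      rw [this]
      rcases ha with ha | ha
      · exact Or.inl (ha.trans ⟨1, by simp⟩)
      · exact Or.inr (ha.trans ⟨1, by simp⟩)
  · intro h
    rcases h with h | h
    · -- use merge with roles of i and j swapped
      have hdiff' : ¬σ.SameCycle j i := fun hc => hdiff hc.symm
      have := merge_reaches hdiff' l h
      rw [Equiv.swap_comm j i] at this
      have hij : ρ.SameCycle i j := merge_reaches hdiff j (Equiv.Perm.SameCycle.refl _ _)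
      exact hij.trans this
    · exact merge_reaches hdiff l h

/-- Split (special form): multiplying by `swap i (σ i)` cuts `σ i` out of the cycle of `i`. -/
lemma sameCycle_mul_swap_split {σ : Equiv.Perm α} {i : α} (hii : σ i ≠ i) :
    (∀ l, (σ * Equiv.swap i (σ i)).SameCycle i l ↔ (σ.SameCycle i l ∧ l ≠ σ i)) ∧
      (σ * Equiv.swap i (σ i)) (σ i) = σ i := by
  set ρ := σ * Equiv.swap i (σ i) with hρ
  have hfix : ρ (σ i) = σ i := by
    show σ (Equiv.swap i (σ i) (σ i)) = σ i
    rw [Equiv.swap_apply_right]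
  refine ⟨fun l => ⟨?_, ?_⟩, hfix⟩
  · intro h
    refine sameCycle_of_invariant (S := {x | σ.SameCycle i x ∧ x ≠ σ i})
      ?_ ⟨Equiv.Perm.SameCycle.refl _ _, fun hc => hii hc.symm⟩ h
    · intro a ⟨ha1, ha2⟩
      rcases eq_or_ne a i with rfl | hai
      · have : ρ a = σ (σ a) := by
          show σ (Equiv.swap a (σ a) a) = σ (σ a)
          rw [Equiv.swap_apply_left]
        rw [this]
        refine ⟨ha1.trans (sameCycle_iff_nat.mpr ⟨2, ?_⟩), fun hc => hii (σ.injective hc)⟩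
        rw [pow_succ, Equiv.Perm.mul_apply, pow_one]
      · have : ρ a = σ a := by
          show σ (Equiv.swap i (σ i) a) = σ a
          rw [Equiv.swap_apply_of_ne_of_ne hai ha2]
        rw [this]
        exact ⟨ha1.trans ⟨1, by simp⟩, fun hc => hai (σ.injective hc)⟩
  · rintro ⟨hl, hlne⟩
    set d := Function.minimalPeriod σ i with hd
    have hd0 : 0 < d := minimalPeriod_perm_pos σ i
    have hd1 : 1 < d := by
      by_contra h
      push_neg at h
      have hδ : d = 1 := by omega
      have h2 : (σ ^ d) i = i := by rw [hd]; exact pow_minimalPeriod_perm σ i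
      rw [hδ, pow_one] at h2
      exact hii h2
    have key : ∀ t, 2 ≤ t → t ≤ d → (ρ ^ (t - 1)) i = (σ ^ t) i := by
      intro t
      induction t with
      | zero => intro h; omega
      | succ t ih =>
        intro h2 hle
        rcases Nat.eq_or_lt_of_le h2 with h1 | h1
        · have ht1 : t = 1 := by omega
          subst ht1
          show ρ i = (σ ^ 2) i
          show σ (Equiv.swap i (σ i) i) = (σ ^ 2) i
          rw [Equiv.swap_apply_left, pow_succ, pow_one, Equiv.Perm.mul_apply]
        · have ht2 : 2 ≤ t := by omega
          have ih' := ih ht2 (by omega)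
          have hstep : t + 1 - 1 = (t - 1) + 1 := by omega
          rw [hstep, pow_succ' ρ (t-1), Equiv.Perm.mul_apply, ih']
          have hne1 : (σ ^ t) i ≠ i := pow_ne_of_lt_minimalPeriod (by omega) (by omega)
          have hne2 : (σ ^ t) i ≠ σ i := by
            intro hc
            have : (σ ^ (t-1)) i = i := by
              apply σ.injective
              rw [← Equiv.Perm.mul_apply, ← pow_succ']
              have : t - 1 + 1 = t := by omega
              rw [this, hc]
          -- contradiction: 0 < t-1 < d
            exact pow_ne_of_lt_minimalPeriod (t := t - 1) (by omega) (by omega) this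
          show σ (Equiv.swap i (σ i) ((σ ^ t) i)) = (σ ^ (t+1)) i
          rw [Equiv.swap_apply_of_ne_of_ne hne1 hne2, pow_succ' σ t, Equiv.Perm.mul_apply]
    rw [sameCycle_iff_nat] at hl
    obtain ⟨n, rfl⟩ := hl
    have hmod : (σ ^ n) i = (σ ^ (n % d)) i := (pow_mod_minimalPeriod_perm σ i n).symm
    rcases Nat.eq_zero_or_pos (n % d) with h0 | h0
    · rw [hmod, h0]
      exact Equiv.Perm.SameCycle.refl _ _
    · rcases Nat.eq_or_lt_of_le h0 with h1 | h1
      · exfalso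
        apply hlne
        rw [hmod, ← h1, pow_one]
      · have h2 : 2 ≤ n % d := by omega
        have hled : n % d ≤ d := le_of_lt (Nat.mod_lt _ hd0)
        have := key (n % d) h2 hled
        rw [hmod, ← this]
        exact ⟨((n % d - 1 : ℕ) : ℤ), by simp⟩

end PermAux



namespace GW
variable {m n : ℕ}

/-! ### basic cycle facts -/

lemma mem_cycleOf {x : GW m n} {i j : Fin n} : j ∈ x.cycleOf i ↔ x.perm.SameCycle i j := by
  simp [cycleOf]

lemma self_mem_cycleOf (x : GW m n) (i : Fin n) : i ∈ x.cycleOf i :=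
  mem_cycleOf.mpr (Equiv.Perm.SameCycle.refl _ _)

lemma cycleOf_nonempty (x : GW m n) (i : Fin n) : (x.cycleOf i).Nonempty :=
  ⟨i, self_mem_cycleOf x i⟩

lemma cycleOf_eq_of_sameCycle {x : GW m n} {i j : Fin n} (h : x.perm.SameCycle i j) :
    x.cycleOf i = x.cycleOf j := by
  ext k
  simp only [mem_cycleOf]
  exact ⟨fun hk => h.symm.trans hk, fun hk => h.trans hk⟩

lemma cycleOf_mem_cycles (x : GW m n) (i : Fin n) : x.cycleOf i ∈ x.cycles :=
  Finset.mem_image_of_mem _ (Finset.mem_univ i)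

lemma mem_cycles {x : GW m n} {C : Finset (Fin n)} : C ∈ x.cycles ↔ ∃ i, x.cycleOf i = C := by
  simp [cycles]

lemma cycleOf_eq_of_mem {x : GW m n} {C : Finset (Fin n)} (hC : C ∈ x.cycles) {q : Fin n}
    (hq : q ∈ C) : C = x.cycleOf q := by
  obtain ⟨i, rfl⟩ := mem_cycles.mp hC
  exact cycleOf_eq_of_sameCycle (mem_cycleOf.mp hq)

lemma cycles_nonempty {x : GW m n} {C : Finset (Fin n)} (hC : C ∈ x.cycles) : C.Nonempty := by
  obtain ⟨i, rfl⟩ := mem_cycles.mp hC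
  exact cycleOf_nonempty x i

lemma cycles_disjoint {x : GW m n} {C D : Finset (Fin n)} (hC : C ∈ x.cycles) (hD : D ∈ x.cycles)
    (hne : C ≠ D) : Disjoint C D := by
  rw [Finset.disjoint_left]
  intro a haC haD
  exact hne ((cycleOf_eq_of_mem hC haC).trans (cycleOf_eq_of_mem hD haD).symm)

lemma cycles_biUnion (x : GW m n) : x.cycles.biUnion id = Finset.univ := by
  apply Finset.eq_univ_of_forall
  intro k
  exact Finset.mem_biUnion.mpr ⟨x.cycleOf k, cycleOf_mem_cycles x k, self_mem_cycleOf x k⟩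

lemma sum_cycles (x : GW m n) (f : Fin n → ZMod m) :
    ∑ C ∈ x.cycles, ∑ k ∈ C, f k = ∑ k, f k := by
  rw [← cycles_biUnion x, Finset.sum_biUnion]
  · rfl
  · intro C hC D hD hne
    exact cycles_disjoint hC hD hne

lemma sum_cycWt (x : GW m n) : ∑ C ∈ x.cycles, cycWt x C = wtTot x := sum_cycles x x.wt

lemma sum_card_cycles (x : GW m n) : ∑ C ∈ x.cycles, C.card = n := by
  rw [← Finset.card_biUnion (fun C hC D hD hne => cycles_disjoint hC hD hne)]
  have := congrArg Finset.card (cycles_biUnion x)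
  simp only [Finset.card_univ, Fintype.card_fin] at this
  exact this

lemma image_perm_cycleOf (x : GW m n) (i : Fin n) :
    (x.cycleOf i).image ⇑x.perm = x.cycleOf i := by
  apply Finset.eq_of_subset_of_card_le
  · intro k hk
    obtain ⟨a, ha, rfl⟩ := Finset.mem_image.mp hk
    exact mem_cycleOf.mpr ((mem_cycleOf.mp ha).trans ⟨1, by simp⟩)
  · rw [Finset.card_image_of_injective _ x.perm.injective]

lemma image_perm_inv_cycleOf (x : GW m n) (i : Fin n) :
    (x.cycleOf i).image ⇑(x.perm⁻¹) = x.cycleOf i := by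
  apply Finset.eq_of_subset_of_card_le
  · intro k hk
    obtain ⟨a, ha, rfl⟩ := Finset.mem_image.mp hk
    refine mem_cycleOf.mpr ((mem_cycleOf.mp ha).trans ⟨-1, by simp⟩)
  · rw [Finset.card_image_of_injective _ (x.perm⁻¹).injective]

lemma sum_comp_perm_inv {x : GW m n} {C : Finset (Fin n)} (hC : C ∈ x.cycles)
    (f : Fin n → ZMod m) : ∑ k ∈ C, f (x.perm⁻¹ k) = ∑ k ∈ C, f k := by
  obtain ⟨i, rfl⟩ := mem_cycles.mp hC
  have h1 : ∑ k ∈ (x.cycleOf i).image ⇑(x.perm⁻¹), f k = ∑ k ∈ x.cycleOf i, f (x.perm⁻¹ k) :=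
    Finset.sum_image (fun a _ b _ h => (x.perm⁻¹).injective h)
  rw [image_perm_inv_cycleOf] at h1
  exact h1.symm

lemma cycWt_mul {x t : GW m n} {C : Finset (Fin n)} (hC : C ∈ x.cycles) :
    cycWt (x * t) C = cycWt x C + ∑ k ∈ C, t.wt k := by
  unfold cycWt
  simp only [mul_wt]
  rw [Finset.sum_add_distrib, sum_comp_perm_inv hC]

/-! ### congruence lemmas -/

lemma cycleOf_congr {x y : GW m n} (h : x.perm = y.perm) (i : Fin n) :
    x.cycleOf i = y.cycleOf i := by
  unfold cycleOf; rw [h]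

lemma cycles_congr {x y : GW m n} (h : x.perm = y.perm) : x.cycles = y.cycles := by
  unfold cycles
  exact Finset.image_congr (fun i _ => cycleOf_congr h i)

/-! ### inverse -/

lemma cycleOf_inv (x : GW m n) (i : Fin n) : (x⁻¹).cycleOf i = x.cycleOf i := by
  unfold cycleOf
  apply Finset.filter_congr
  intro k _
  simp only [inv_perm, Equiv.Perm.sameCycle_inv]

lemma cycles_inv (x : GW m n) : (x⁻¹).cycles = x.cycles := by
  unfold cycles
  exact Finset.image_congr (fun i _ => cycleOf_inv x i)

lemma cycWt_inv {x : GW m n} {C : Finset (Fin n)} (hC : C ∈ x.cycles) :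
    cycWt x⁻¹ C = -cycWt x C := by
  obtain ⟨i, rfl⟩ := mem_cycles.mp hC
  unfold cycWt
  simp only [inv_wt]
  have h1 : ∑ k ∈ (x.cycleOf i).image ⇑x.perm, x.wt k = ∑ k ∈ x.cycleOf i, x.wt (x.perm k) :=
    Finset.sum_image (fun a _ b _ h => x.perm.injective h)
  rw [image_perm_cycleOf] at h1
  rw [show ∑ k ∈ x.cycleOf i, -x.wt (x.perm k) = -∑ k ∈ x.cycleOf i, x.wt (x.perm k) from
    Finset.sum_neg_distrib _, ← h1]

lemma c0_inv (x : GW m n) : c0 x⁻¹ = c0 x := by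
  unfold c0
  rw [cycles_inv]
  congr 1
  apply Finset.filter_congr
  intro C hC
  rw [cycWt_inv hC]
  simp

lemma codimfix_inv (x : GW m n) : codimfix x⁻¹ = codimfix x := by
  unfold codimfix; rw [c0_inv]

/-! ### wtTot -/

lemma wtTot_mul (x y : GW m n) : wtTot (x * y) = wtTot x + wtTot y := by
  unfold wtTot
  simp only [mul_wt]
  rw [Finset.sum_add_distrib]
  congr 1
  exact Equiv.sum_comp x.perm⁻¹ y.wt

lemma wtTot_one : wtTot (1 : GW m n) = 0 := by simp [wtTot]

lemma wtTot_inv (x : GW m n) : wtTot x⁻¹ = -wtTot x := by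
  have := wtTot_mul x⁻¹ x
  rw [inv_mul_cancel, wtTot_one] at this
  exact eq_neg_of_add_eq_zero_left this.symm

/-! ### counting basics -/

lemma numCycles_le (x : GW m n) : numCycles x ≤ n := by
  unfold numCycles cycles
  exact le_trans (Finset.card_image_le) (by simp)

lemma c0_le_numCycles (x : GW m n) : c0 x ≤ numCycles x := Finset.card_filter_le _ _

lemma c0_le (x : GW m n) : c0 x ≤ n := le_trans (c0_le_numCycles x) (numCycles_le x)

lemma all_singletons_of_numCycles_eq {x : GW m n} (h1 : numCycles x = n) :
    ∀ C ∈ x.cycles, C.card = 1 := by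
  by_contra hc
  push_neg at hc
  obtain ⟨C, hC, hCcard⟩ := hc
  have h2 : 2 ≤ C.card := by
    have := Finset.card_pos.mpr (cycles_nonempty hC); omega
  have hsum := sum_card_cycles x
  rw [← Finset.add_sum_erase _ _ hC] at hsum
  have hbound : (x.cycles.erase C).card ≤ ∑ D ∈ x.cycles.erase C, D.card := by
    rw [Finset.card_eq_sum_ones]
    apply Finset.sum_le_sum
    intro D hD
    exact Finset.card_pos.mpr (cycles_nonempty (Finset.mem_of_mem_erase hD))
  have hcard : (x.cycles.erase C).card = numCycles x - 1 := Finset.card_erase_of_mem hC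
  have hpos : 1 ≤ numCycles x := Finset.card_pos.mpr ⟨C, hC⟩
  omega

lemma cycleOf_one (i : Fin n) : (1 : GW m n).cycleOf i = {i} := by
  ext k
  simp [mem_cycleOf, Equiv.Perm.sameCycle_one, eq_comm]

lemma cycles_one : (1 : GW m n).cycles = Finset.univ.image fun i => ({i} : Finset (Fin n)) := by
  unfold cycles
  exact Finset.image_congr (fun i _ => cycleOf_one i)

lemma c0_one : c0 (1 : GW m n) = n := by
  unfold c0
  rw [cycles_one]
  rw [Finset.filter_true_of_mem]
  · rw [Finset.card_image_of_injective _ (fun a b h => by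
      simpa using congrArg (fun (s : Finset (Fin n)) => a ∈ s) h)]
    simp
  · intro C hC
    obtain ⟨i, _, rfl⟩ := Finset.mem_image.mp hC
    simp [cycWt]

lemma c0_eq_n_iff {x : GW m n} : c0 x = n ↔ x = 1 := by
  constructor
  · intro h
    have h1 : numCycles x = n := by
      have := c0_le_numCycles x
      have := numCycles_le x
      omega
    have hsing := all_singletons_of_numCycles_eq h1
    have hperm : ∀ i, x.perm i = i := by
      intro i
      have hmem : x.perm i ∈ x.cycleOf i := mem_cycleOf.mpr ⟨1, by simp⟩
      have hself := self_mem_cycleOf x i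
      have hcard := hsing _ (cycleOf_mem_cycles x i)
      rw [Finset.card_eq_one] at hcard
      obtain ⟨a, ha⟩ := hcard
      rw [ha] at hmem hself
      simp only [Finset.mem_singleton] at hmem hself
      rw [hmem, hself]
    have hallzero : ∀ C ∈ x.cycles, cycWt x C = 0 := by
      have hsub : x.cycles.filter (fun C => cycWt x C = 0) = x.cycles := by
        apply Finset.eq_of_subset_of_card_le (Finset.filter_subset _ _)
        unfold c0 at h
        unfold numCycles at h1
        omega
      intro C hC
      have := hsub ▸ hC
      rw [← hsub] at hC
      exact (Finset.mem_filter.mp hC).2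
    have hwt : ∀ i, x.wt i = 0 := by
      intro i
      have hcyc : x.cycleOf i = {i} := by
        have hcard := hsing _ (cycleOf_mem_cycles x i)
        rw [Finset.card_eq_one] at hcard
        obtain ⟨a, ha⟩ := hcard
        have := self_mem_cycleOf x i
        rw [ha] at this ⊢
        simp only [Finset.mem_singleton] at this
        rw [this]
      have := hallzero _ (cycleOf_mem_cycles x i)
      rw [hcyc] at this
      simpa [cycWt] using this
    ext i
    · simp [hperm i]
    · exact hwt i
  · rintro rfl
    exact c0_one

lemma codimfix_one : codimfix (1 : GW m n) = 0 := by
  unfold codimfix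
  rw [c0_one]
  omega

lemma codimfix_eq_zero_iff {x : GW m n} : codimfix x = 0 ↔ x = 1 := by
  unfold codimfix
  rw [← c0_eq_n_iff]
  have := c0_le x
  omega

/-! ### weight update at one point -/

lemma filter_card_split {β : Type*} [DecidableEq β] {s : Finset β} {a : β} (ha : a ∈ s)
    (p : β → Prop) [DecidablePred p] :
    (s.filter p).card = ((s.erase a).filter p).card + (if p a then 1 else 0) := by
  nth_rewrite 1 [← Finset.insert_erase ha]
  rw [Finset.filter_insert]
  split
  · rw [Finset.card_insert_of_notMem
      (fun h => (Finset.mem_erase.mp (Finset.mem_filter.mp h).1).1 rfl)]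
  · omega

lemma update_c0 {x x' : GW m n} {q : Fin n} {c : ZMod m}
    (hperm : x'.perm = x.perm)
    (hwt : ∀ k, x'.wt k = x.wt k + (if k = q then c else 0)) :
    c0 x' + (if cycWt x (x.cycleOf q) = 0 then 1 else 0)
      = c0 x + (if cycWt x (x.cycleOf q) + c = 0 then 1 else 0) := by
  have hcyc : x'.cycles = x.cycles := cycles_congr hperm
  have hwtC : ∀ C ∈ x.cycles, cycWt x' C = cycWt x C + (if q ∈ C then c else 0) := by
    intro C hC
    unfold cycWt
    rw [Finset.sum_congr rfl (fun k _ => hwt k), Finset.sum_add_distrib]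
    congr 1
    exact Finset.sum_ite_eq' C q (fun _ => c)
  have hCq : x.cycleOf q ∈ x.cycles := cycleOf_mem_cycles x q
  have hqCq : q ∈ x.cycleOf q := self_mem_cycleOf x q
  unfold c0
  rw [hcyc]
  rw [filter_card_split hCq (fun C => cycWt x' C = 0),
    filter_card_split hCq (fun C => cycWt x C = 0)]
  have heqf : ((x.cycles.erase (x.cycleOf q)).filter fun C => cycWt x' C = 0)
      = ((x.cycles.erase (x.cycleOf q)).filter fun C => cycWt x C = 0) := by
    apply Finset.filter_congr
    intro C hC
    have hCc : C ∈ x.cycles := Finset.mem_of_mem_erase hC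
    have hqc : q ∉ C := fun hq => (Finset.mem_erase.mp hC).1 (cycleOf_eq_of_mem hCc hq)
    rw [hwtC C hCc, if_neg hqc, add_zero]
  rw [heqf, hwtC _ hCq, if_pos hqCq]
  split_ifs <;> omega

/-! ### diagonal and transposition reflections -/

def diagOne (q : Fin n) (c : ZMod m) : GW m n := ⟨1, fun k => if k = q then c else 0⟩

@[simp] lemma diagOne_perm (q : Fin n) (c : ZMod m) : (diagOne q c).perm = 1 := rfl
@[simp] lemma diagOne_wt (q : Fin n) (c : ZMod m) (k : Fin n) :
    (diagOne q c).wt k = if k = q then c else 0 := rfl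

lemma mul_diagOne_perm (x : GW m n) (q : Fin n) (c : ZMod m) :
    (x * diagOne q c).perm = x.perm := by simp

lemma mul_diagOne_wt (x : GW m n) (q : Fin n) (c : ZMod m) (k : Fin n) :
    (x * diagOne q c).wt k = x.wt k + (if k = x.perm q then c else 0) := by
  simp only [mul_wt, diagOne_wt]
  congr 1
  by_cases h : k = x.perm q
  · subst h; simp
  · rw [if_neg h, if_neg (fun hc => h (by rw [← hc]; simp))]

lemma diagOne_mul_diagOne (q : Fin n) (c c' : ZMod m) :
    diagOne q c * diagOne q c' = diagOne q (c + c') := by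
  ext k
  · simp [diagOne]
  · simp only [mul_wt, diagOne_wt, diagOne_perm]
    by_cases h : k = q <;> simp [h]

lemma c0_mul_diagOne (x : GW m n) (q : Fin n) (c : ZMod m) :
    c0 (x * diagOne q c) + (if cycWt x (x.cycleOf q) = 0 then 1 else 0)
      = c0 x + (if cycWt x (x.cycleOf q) + c = 0 then 1 else 0) := by
  have h := update_c0 (x := x) (x' := x * diagOne q c) (q := x.perm q) (c := c)
    (mul_diagOne_perm x q c) (mul_diagOne_wt x q c)
  rwa [cycleOf_eq_of_sameCycle (x := x) (i := x.perm q) (j := q) ⟨-1, by simp⟩] at h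

lemma wtTot_diagOne (q : Fin n) (c : ZMod m) : wtTot (diagOne q c) = c := by
  unfold wtTot
  simp only [diagOne_wt]
  rw [Finset.sum_ite_eq' Finset.univ q (fun _ => c), if_pos (Finset.mem_univ q)]

lemma codimfix_diagOne {q : Fin n} {c : ZMod m} (hc : c ≠ 0) :
    codimfix (diagOne q c : GW m n) = 1 := by
  unfold codimfix c0
  have hcy : (diagOne q c : GW m n).cycles = Finset.univ.image fun i => ({i} : Finset (Fin n)) :=
    (cycles_congr (x := diagOne q c) (y := 1) rfl).trans cycles_one
  rw [hcy]
  have himg : (Finset.univ.image fun i => ({i} : Finset (Fin n))).filter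
      (fun C => cycWt (diagOne q c) C = 0)
      = (Finset.univ.filter fun i => (diagOne q c).wt i = 0).image
        (fun i => ({i} : Finset (Fin n))) := by
    rw [Finset.filter_image]
    congr 1
    apply Finset.filter_congr
    intro k _
    simp [cycWt, eq_comm]
  rw [himg, Finset.card_image_of_injective _ (fun a b h => by
      simpa using congrArg (fun (s : Finset (Fin n)) => a ∈ s) h)]
  have : Finset.univ.filter (fun i => (diagOne q c : GW m n).wt i = 0) = Finset.univ.erase q := by
    ext k
    simp only [Finset.mem_filter, Finset.mem_univ, true_and, Finset.mem_erase, diagOne_wt]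
    by_cases h : k = q <;> simp [h, hc]
  rw [this, Finset.card_erase_of_mem (Finset.mem_univ q)]
  have hn : 1 ≤ n := by
    rcases Nat.eq_zero_or_pos n with h | h
    · exact absurd (h ▸ q).2 (by omega)
    · exact h
  simp only [Finset.card_univ, Fintype.card_fin]
  omega

def swapB (i j : Fin n) (β : ZMod m) : GW m n :=
  ⟨Equiv.swap i j, fun k => if k = i then β else if k = j then -β else 0⟩

@[simp] lemma swapB_perm (i j : Fin n) (β : ZMod m) : (swapB i j β).perm = Equiv.swap i j := rfl

lemma swapB_wt_eq {i j : Fin n} (hij : i ≠ j) (β : ZMod m) (k : Fin n) :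
    (swapB i j β).wt k = (if k = i then β else 0) + (if k = j then -β else 0) := by
  show (if k = i then β else if k = j then -β else 0) = _
  by_cases h1 : k = i
  · subst h1; rw [if_pos rfl, if_pos rfl, if_neg hij, add_zero]
  · rw [if_neg h1, if_neg h1, zero_add]

lemma swapB_mul_self {i j : Fin n} (hij : i ≠ j) (β : ZMod m) :
    swapB i j β * swapB i j β = 1 := by
  ext k
  · simp [swapB, Equiv.swap_apply_self]
  · simp only [mul_wt, one_wt, swapB_perm]
    rw [swapB_wt_eq hij β, swapB_wt_eq hij β]
    have : (Equiv.swap i j)⁻¹ k = Equiv.swap i j k := by rw [Equiv.swap_inv]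
    rw [this]
    by_cases h1 : k = i
    · subst h1; simp [Equiv.swap_apply_left, hij, Ne.symm hij]
    · by_cases h2 : k = j
      · subst h2; simp [Equiv.swap_apply_right, hij, Ne.symm hij]
      · rw [Equiv.swap_apply_of_ne_of_ne h1 h2]
        simp [h1, h2]

lemma sum_swapB_wt {i j : Fin n} (hij : i ≠ j) (β : ZMod m) (C : Finset (Fin n)) :
    ∑ k ∈ C, (swapB i j β).wt k
      = (if i ∈ C then β else 0) + (if j ∈ C then -β else 0) := by
  rw [Finset.sum_congr rfl (fun k _ => swapB_wt_eq hij β k), Finset.sum_add_distrib,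
    Finset.sum_ite_eq' C i (fun _ => β), Finset.sum_ite_eq' C j (fun _ => -β)]

lemma wtTot_swapB {i j : Fin n} (hij : i ≠ j) (β : ZMod m) : wtTot (swapB i j β) = 0 := by
  unfold wtTot
  rw [sum_swapB_wt hij β]
  simp

lemma codimfix_swapB {i j : Fin n} (hij : i ≠ j) (β : ZMod m) :
    codimfix (swapB i j β) = 1 := by
  have hcycle_i : (swapB i j β).cycleOf i = {i, j} := by
    ext l
    rw [mem_cycleOf]
    have : (swapB i j β).perm = 1 * Equiv.swap i j := by rw [one_mul]; rfl
    rw [this, PermAux.sameCycle_mul_swap_merge (by simpa using hij) l]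
    simp [Equiv.Perm.sameCycle_one, eq_comm, Finset.mem_insert, Finset.mem_singleton]
  have hcycle_out : ∀ k, k ≠ i → k ≠ j → (swapB i j β).cycleOf k = {k} := by
    intro k hki hkj
    ext l
    rw [mem_cycleOf]
    rw [PermAux.sameCycle_fixed (by
      show Equiv.swap i j k = k
      exact Equiv.swap_apply_of_ne_of_ne hki hkj)]
    simp [eq_comm]
  -- all cycles have weight zero
  have hz : ∀ C ∈ (swapB i j β).cycles, cycWt (swapB i j β) C = 0 := by
    intro C hC
    obtain ⟨k, rfl⟩ := mem_cycles.mp hC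
    by_cases h1 : k = i
    · subst h1
      rw [hcycle_i]
      unfold cycWt
      rw [Finset.sum_insert (by simpa using hij), Finset.sum_singleton,
        swapB_wt_eq hij, swapB_wt_eq hij]
      simp [hij, Ne.symm hij]
    · by_cases h2 : k = j
      · subst h2
        rw [cycleOf_eq_of_sameCycle (x := swapB i k β) (i := k) (j := i)
          (by
            rw [show (swapB i k β).perm = 1 * Equiv.swap i k from by rw [one_mul]; rfl]
            exact Equiv.Perm.SameCycle.symm
              ((PermAux.sameCycle_mul_swap_merge (by simpa using hij) k).mpr
                (Or.inr (Equiv.Perm.SameCycle.refl _ _))))]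
        rw [hcycle_i]
        unfold cycWt
        rw [Finset.sum_insert (by simpa using hij), Finset.sum_singleton,
          swapB_wt_eq hij, swapB_wt_eq hij]
        simp [hij, Ne.symm hij]
      · rw [hcycle_out k h1 h2]
        unfold cycWt
        rw [Finset.sum_singleton, swapB_wt_eq hij]
        simp [h1, h2]
  have hc0 : c0 (swapB i j β) = numCycles (swapB i j β) := by
    unfold c0 numCycles
    rw [Finset.filter_true_of_mem hz]
  -- numCycles = n - 1
  have hnum : numCycles (swapB i j β) + 1 = n := by
    have hsum := sum_card_cycles (swapB i j β)
    have hCi : (swapB i j β).cycleOf i ∈ (swapB i j β).cycles := cycleOf_mem_cycles _ i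
    rw [← Finset.add_sum_erase _ _ hCi] at hsum
    have hones : ∀ C ∈ (swapB i j β).cycles.erase ((swapB i j β).cycleOf i), C.card = 1 := by
      intro C hC
      obtain ⟨k, rfl⟩ := mem_cycles.mp (Finset.mem_of_mem_erase hC)
      have h1 : k ≠ i := fun hc => (Finset.mem_erase.mp hC).1 (by rw [hc])
      have h2 : k ≠ j := by
        intro hc
        subst hc
        apply (Finset.mem_erase.mp hC).1
        apply cycleOf_eq_of_sameCycle
        rw [show (swapB i k β).perm = 1 * Equiv.swap i k from by rw [one_mul]; rfl]
        exact Equiv.Perm.SameCycle.symm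
          ((PermAux.sameCycle_mul_swap_merge (by simpa using hij) k).mpr
            (Or.inr (Equiv.Perm.SameCycle.refl _ _)))
      rw [hcycle_out k h1 h2, Finset.card_singleton]
    rw [Finset.sum_congr rfl hones] at hsum
    simp only [Finset.sum_const, smul_eq_mul, mul_one] at hsum
    rw [Finset.card_erase_of_mem hCi] at hsum
    rw [hcycle_i] at hsum
    rw [Finset.card_insert_of_notMem (by simpa using hij), Finset.card_singleton] at hsum
    have hpos : 1 ≤ numCycles (swapB i j β) := Finset.card_pos.mpr ⟨_, hCi⟩
    unfold numCycles at hpos ⊢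
    omega
  unfold codimfix
  omega

/-! ### surgery at the GW level -/

lemma cycleOf_ne_of_not_sameCycle {x : GW m n} {a b : Fin n} (h : ¬x.perm.SameCycle a b) :
    x.cycleOf a ≠ x.cycleOf b := fun hc =>
  h (mem_cycleOf.mp (hc ▸ self_mem_cycleOf x b))

lemma persist_swapB {x : GW m n} {i j : Fin n} (hij : i ≠ j) (β : ZMod m)
    {C : Finset (Fin n)} (hC : C ∈ x.cycles) (hi : i ∉ C) (hj : j ∉ C) :
    C ∈ (x * swapB i j β).cycles ∧ cycWt (x * swapB i j β) C = cycWt x C := by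
  obtain ⟨k, rfl⟩ := mem_cycles.mp hC
  have hki : ¬x.perm.SameCycle i k := fun h => hi (mem_cycleOf.mpr h.symm)
  have hkj : ¬x.perm.SameCycle j k := fun h => hj (mem_cycleOf.mpr h.symm)
  have hcyc : (x * swapB i j β).cycleOf k = x.cycleOf k := by
    ext l
    rw [mem_cycleOf, mem_cycleOf]
    exact PermAux.sameCycle_mul_swap_outside hki hkj l
  constructor
  · rw [← hcyc]; exact cycleOf_mem_cycles _ k
  · rw [cycWt_mul hC, sum_swapB_wt hij, if_neg hi, if_neg hj]
    simp

lemma merge_swapB {x : GW m n} {i j : Fin n} (β : ZMod m)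
    (hdiff : ¬x.perm.SameCycle i j) :
    (x.cycleOf i ∪ x.cycleOf j) ∈ (x * swapB i j β).cycles ∧
      cycWt (x * swapB i j β) (x.cycleOf i ∪ x.cycleOf j)
        = cycWt x (x.cycleOf i) + cycWt x (x.cycleOf j) := by
  have hij : i ≠ j := fun h => hdiff (h ▸ Equiv.Perm.SameCycle.refl _ _)
  have hcyc : (x * swapB i j β).cycleOf i = x.cycleOf i ∪ x.cycleOf j := by
    ext l
    rw [mem_cycleOf]
    rw [show (x * swapB i j β).perm = x.perm * Equiv.swap i j from rfl]
    rw [PermAux.sameCycle_mul_swap_merge hdiff l]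
    simp [Finset.mem_union, mem_cycleOf]
  have hdisj : Disjoint (x.cycleOf i) (x.cycleOf j) :=
    cycles_disjoint (cycleOf_mem_cycles x i) (cycleOf_mem_cycles x j)
      (cycleOf_ne_of_not_sameCycle hdiff)
  constructor
  · rw [← hcyc]; exact cycleOf_mem_cycles _ i
  · unfold cycWt
    rw [Finset.sum_union hdisj]
    have h1 : ∑ k ∈ x.cycleOf i, (x * swapB i j β).wt k = cycWt x (x.cycleOf i) + β := by
      rw [show ∑ k ∈ x.cycleOf i, (x * swapB i j β).wt k
          = cycWt (x * swapB i j β) (x.cycleOf i) from rfl]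
      rw [cycWt_mul (cycleOf_mem_cycles x i), sum_swapB_wt hij,
        if_pos (self_mem_cycleOf x i), if_neg (fun h => hdiff (mem_cycleOf.mp h))]
      simp
    have h2 : ∑ k ∈ x.cycleOf j, (x * swapB i j β).wt k = cycWt x (x.cycleOf j) + -β := by
      rw [show ∑ k ∈ x.cycleOf j, (x * swapB i j β).wt k
          = cycWt (x * swapB i j β) (x.cycleOf j) from rfl]
      rw [cycWt_mul (cycleOf_mem_cycles x j), sum_swapB_wt hij,
        if_pos (self_mem_cycleOf x j), if_neg (fun h => hdiff (mem_cycleOf.mp h).symm)]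
      ring
    rw [h1, h2]
    unfold cycWt
    ring

lemma c0_mul_swapB_ge (x : GW m n) {i j : Fin n} (hij : i ≠ j) (β : ZMod m) :
    c0 x ≤ c0 (x * swapB i j β) + 1 := by
  classical
  set t := swapB i j β with ht
  have hc0x : c0 x = (x.cycles.filter fun C => cycWt x C = 0).card := rfl
  have hc0x' : c0 (x * t) = ((x * t).cycles.filter fun C => cycWt (x * t) C = 0).card := rfl
  set Z := x.cycles.filter fun C => cycWt x C = 0 with hZ
  set Z' := (x * t).cycles.filter fun C => cycWt (x * t) C = 0 with hZ'
  have hper : ∀ C ∈ Z, C ≠ x.cycleOf i → C ≠ x.cycleOf j → C ∈ Z' := by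
    intro C hCZ h1 h2
    obtain ⟨hC, hw⟩ := Finset.mem_filter.mp hCZ
    have hi : i ∉ C := fun h => h1 (cycleOf_eq_of_mem hC h)
    have hj : j ∉ C := fun h => h2 (cycleOf_eq_of_mem hC h)
    obtain ⟨hmem, hwt⟩ := persist_swapB hij β hC hi hj
    exact Finset.mem_filter.mpr ⟨hmem, by rw [hwt, hw]⟩
  by_cases hsame : x.perm.SameCycle i j
  · have hCij : x.cycleOf i = x.cycleOf j := cycleOf_eq_of_sameCycle hsame
    have hsub : Z.erase (x.cycleOf i) ⊆ Z' := by
      intro C hC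
      obtain ⟨hne, hCZ⟩ := Finset.mem_erase.mp hC
      exact hper C hCZ hne (hCij ▸ hne)
    have hcard := Finset.card_le_card hsub
    have h2 : Z.card ≤ (Z.erase (x.cycleOf i)).card + 1 := by
      by_cases hmem : x.cycleOf i ∈ Z
      · rw [Finset.card_erase_of_mem hmem]; omega
      · rw [Finset.erase_eq_of_notMem hmem]; omega
    omega
  · have hne : x.cycleOf i ≠ x.cycleOf j := cycleOf_ne_of_not_sameCycle hsame
    by_cases hzz : cycWt x (x.cycleOf i) = 0 ∧ cycWt x (x.cycleOf j) = 0
    · obtain ⟨hmem, hwt⟩ := merge_swapB β hsame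
      have hM : (x.cycleOf i ∪ x.cycleOf j) ∈ Z' :=
        Finset.mem_filter.mpr ⟨hmem, by rw [hwt, hzz.1, hzz.2, add_zero]⟩
      have hiZ : x.cycleOf i ∈ Z :=
        Finset.mem_filter.mpr ⟨cycleOf_mem_cycles x i, hzz.1⟩
      have hjZ : x.cycleOf j ∈ Z.erase (x.cycleOf i) :=
        Finset.mem_erase.mpr ⟨hne.symm, Finset.mem_filter.mpr ⟨cycleOf_mem_cycles x j, hzz.2⟩⟩
      have hsub : insert (x.cycleOf i ∪ x.cycleOf j)
          ((Z.erase (x.cycleOf i)).erase (x.cycleOf j)) ⊆ Z' := by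
        intro C hC
        rcases Finset.mem_insert.mp hC with rfl | hC
        · exact hM
        · have h2 := (Finset.mem_erase.mp hC).1
          have hC' := Finset.mem_of_mem_erase hC
          have h1 := (Finset.mem_erase.mp hC').1
          exact hper C (Finset.mem_of_mem_erase hC') h1 h2
      have hnotmem : (x.cycleOf i ∪ x.cycleOf j) ∉ (Z.erase (x.cycleOf i)).erase (x.cycleOf j) := by
        intro h
        have hCZ := Finset.mem_of_mem_erase (Finset.mem_of_mem_erase h)
        have hC : (x.cycleOf i ∪ x.cycleOf j) ∈ x.cycles := (Finset.mem_filter.mp hCZ).1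
        have heq : (x.cycleOf i ∪ x.cycleOf j) = x.cycleOf i :=
          (cycleOf_eq_of_mem hC (Finset.mem_union_left _ (self_mem_cycleOf x i)))
        have : j ∈ x.cycleOf i := by
          rw [← heq]; exact Finset.mem_union_right _ (self_mem_cycleOf x j)
        exact hsame (mem_cycleOf.mp this)
      have hcard := Finset.card_le_card hsub
      rw [Finset.card_insert_of_notMem hnotmem] at hcard
      rw [Finset.card_erase_of_mem hjZ, Finset.card_erase_of_mem hiZ] at hcard
      have hpos1 : 1 ≤ Z.card := Finset.card_pos.mpr ⟨_, hiZ⟩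
      have hpos2 : 1 ≤ (Z.erase (x.cycleOf i)).card := Finset.card_pos.mpr ⟨_, hjZ⟩
      rw [Finset.card_erase_of_mem hiZ] at hpos2
      omega
    · have hsub : (Z.erase (x.cycleOf i)).erase (x.cycleOf j) ⊆ Z' := by
        intro C hC
        have h2 := (Finset.mem_erase.mp hC).1
        have hC' := Finset.mem_of_mem_erase hC
        have h1 := (Finset.mem_erase.mp hC').1
        exact hper C (Finset.mem_of_mem_erase hC') h1 h2
      have hcard := Finset.card_le_card hsub
      have hone : x.cycleOf i ∉ Z ∨ x.cycleOf j ∉ Z := by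
        by_contra hcon
        push_neg at hcon
        exact hzz ⟨(Finset.mem_filter.mp hcon.1).2, (Finset.mem_filter.mp hcon.2).2⟩
      have hZcard : Z.card ≤ ((Z.erase (x.cycleOf i)).erase (x.cycleOf j)).card + 1 := by
        rcases hone with hnot | hnot
        · rw [Finset.erase_eq_of_notMem hnot]
          by_cases hmem : x.cycleOf j ∈ Z
          · rw [Finset.card_erase_of_mem hmem]
            have : 1 ≤ Z.card := Finset.card_pos.mpr ⟨_, hmem⟩
            omega
          · rw [Finset.erase_eq_of_notMem hmem]; omega
        · have hnot' : x.cycleOf j ∉ Z.erase (x.cycleOf i) :=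
            fun h => hnot (Finset.mem_of_mem_erase h)
          rw [Finset.erase_eq_of_notMem hnot']
          by_cases hmem : x.cycleOf i ∈ Z
          · rw [Finset.card_erase_of_mem hmem]
            have : 1 ≤ Z.card := Finset.card_pos.mpr ⟨_, hmem⟩
            omega
          · rw [Finset.erase_eq_of_notMem hmem]; omega
      omega

lemma split_swapB {x : GW m n} {i : Fin n} (hii : x.perm i ≠ i) :
    c0 (x * swapB i (x.perm i) (-x.wt (x.perm i))) = c0 x + 1 ∧
      ((∀ C ∈ x.cycles, cycWt x C = 0) →
        ∀ C ∈ (x * swapB i (x.perm i) (-x.wt (x.perm i))).cycles,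
          cycWt (x * swapB i (x.perm i) (-x.wt (x.perm i))) C = 0) := by
  classical
  have hij : i ≠ x.perm i := fun h => hii h.symm
  set j := x.perm i with hj
  set β := -x.wt j with hβ
  set t := swapB i j β with ht
  set x' := x * t with hx'
  obtain ⟨hiffs, hfix⟩ := PermAux.sameCycle_mul_swap_split (σ := x.perm) hii
  have hperm' : x'.perm = x.perm * Equiv.swap i j := rfl
  have hsij : x.perm.SameCycle i j := ⟨1, by simp [hj]⟩
  have F1 : x'.wt j = 0 := by
    show x.wt j + t.wt (x.perm⁻¹ j) = 0
    have : x.perm⁻¹ j = i := by rw [hj]; simp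
    rw [this, ht]
    show x.wt j + (if i = i then β else if i = j then -β else 0) = 0
    rw [if_pos rfl, hβ]
    ring
  have F2 : x'.cycleOf j = {j} := by
    ext l
    rw [mem_cycleOf, Finset.mem_singleton]
    rw [show x'.perm = x.perm * Equiv.swap i (x.perm i) from rfl]
    exact PermAux.sameCycle_fixed hfix
  have F3 : x'.cycleOf i = (x.cycleOf i).erase j := by
    ext l
    rw [mem_cycleOf, Finset.mem_erase, mem_cycleOf]
    rw [show x'.perm = x.perm * Equiv.swap i (x.perm i) from rfl]
    rw [hiffs l]
    exact and_comm
  have F4 : cycWt x' (x.cycleOf i) = cycWt x (x.cycleOf i) := by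
    rw [hx', ht, cycWt_mul (cycleOf_mem_cycles x i), sum_swapB_wt hij,
      if_pos (self_mem_cycleOf x i), if_pos (mem_cycleOf.mpr hsij)]
    ring
  have F5 : cycWt x' ((x.cycleOf i).erase j) = cycWt x (x.cycleOf i) := by
    have hjmem : j ∈ x.cycleOf i := mem_cycleOf.mpr hsij
    have hsum := Finset.add_sum_erase (x.cycleOf i) x'.wt hjmem
    have hst : cycWt x' ((x.cycleOf i).erase j) = cycWt x' (x.cycleOf i) := by
      unfold cycWt
      rw [← hsum, F1, zero_add]
    rw [hst, F4]
  have F6 : ∀ C ∈ x.cycles, i ∉ C → (C ∈ x'.cycles ∧ cycWt x' C = cycWt x C) := by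
    intro C hC hi
    have hjC : j ∉ C := by
      intro hjc
      have : C = x.cycleOf j := cycleOf_eq_of_mem hC hjc
      rw [this, ← cycleOf_eq_of_sameCycle hsij] at hi
      exact hi (self_mem_cycleOf x i)
    exact persist_swapB hij β hC hi hjC
  have houtside : ∀ k, ¬x.perm.SameCycle i k → x'.cycleOf k = x.cycleOf k := by
    intro k hki
    have hkj : ¬x.perm.SameCycle j k := fun h => hki (hsij.trans h)
    ext l
    rw [mem_cycleOf, mem_cycleOf]
    rw [show x'.perm = x.perm * Equiv.swap i j from rfl]
    exact PermAux.sameCycle_mul_swap_outside hki hkj l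
  have hsingnot : ({j} : Finset (Fin n)) ∉ x.cycles := by
    intro hmem
    have : ({j} : Finset (Fin n)) = x.cycleOf j :=
      cycleOf_eq_of_mem hmem (Finset.mem_singleton_self j)
    have hi' : i ∈ x.cycleOf j := mem_cycleOf.mpr hsij.symm
    rw [← this] at hi'
    exact hij (Finset.mem_singleton.mp hi')
  constructor
  · -- c0 x' = c0 x + 1
    have hle : c0 x' ≤ c0 x + 1 := by
      have h1 := c0_mul_swapB_ge x' hij β
      have h2 : x' * swapB i j β = x := by
        rw [hx', ht, mul_assoc, swapB_mul_self hij, mul_one]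
      rw [h2] at h1
      exact h1
    have hge : c0 x + 1 ≤ c0 x' := by
      have hc0x : c0 x = (x.cycles.filter fun C => cycWt x C = 0).card := rfl
      have hc0x' : c0 x' = (x'.cycles.filter fun C => cycWt x' C = 0).card := rfl
      set Z := x.cycles.filter fun C => cycWt x C = 0 with hZ
      set Z' := x'.cycles.filter fun C => cycWt x' C = 0 with hZ'
      have hjZ' : ({j} : Finset (Fin n)) ∈ Z' := by
        refine Finset.mem_filter.mpr ⟨?_, ?_⟩
        · rw [← F2]; exact cycleOf_mem_cycles x' j
        · unfold cycWt; rw [Finset.sum_singleton, F1]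
      have hjnotZ : ({j} : Finset (Fin n)) ∉ Z := fun h => hsingnot (Finset.mem_filter.mp h).1
      have hperZ : ∀ C ∈ Z, C ≠ x.cycleOf i → C ∈ Z' := by
        intro C hCZ hne
        obtain ⟨hC, hw⟩ := Finset.mem_filter.mp hCZ
        have hi : i ∉ C := fun h => hne (cycleOf_eq_of_mem hC h)
        obtain ⟨hmem, hwt⟩ := F6 C hC hi
        exact Finset.mem_filter.mpr ⟨hmem, by rw [hwt, hw]⟩
      by_cases hCz : cycWt x (x.cycleOf i) = 0
      · have hiZ : x.cycleOf i ∈ Z :=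
          Finset.mem_filter.mpr ⟨cycleOf_mem_cycles x i, hCz⟩
        have hrem : ((x.cycleOf i).erase j) ∈ Z' := by
          refine Finset.mem_filter.mpr ⟨?_, by rw [F5, hCz]⟩
          rw [← F3]; exact cycleOf_mem_cycles x' i
        have hsub : insert ({j} : Finset (Fin n))
            (insert ((x.cycleOf i).erase j) (Z.erase (x.cycleOf i))) ⊆ Z' := by
          intro C hC
          rcases Finset.mem_insert.mp hC with rfl | hC
          · exact hjZ'
          rcases Finset.mem_insert.mp hC with rfl | hC
          · exact hrem
          · exact hperZ C (Finset.mem_of_mem_erase hC) (Finset.mem_erase.mp hC).1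
        have hcard := Finset.card_le_card hsub
        have hn1 : ((x.cycleOf i).erase j) ∉ Z.erase (x.cycleOf i) := by
          intro h
          have hC := (Finset.mem_filter.mp (Finset.mem_of_mem_erase h)).1
          have himem : i ∈ (x.cycleOf i).erase j :=
            Finset.mem_erase.mpr ⟨hij, self_mem_cycleOf x i⟩
          have heq : (x.cycleOf i).erase j = x.cycleOf i := cycleOf_eq_of_mem hC himem
          have : j ∈ (x.cycleOf i).erase j := by rw [heq]; exact mem_cycleOf.mpr hsij
          exact (Finset.mem_erase.mp this).1 rfl
        have hn2 : ({j} : Finset (Fin n)) ∉ insert ((x.cycleOf i).erase j) (Z.erase (x.cycleOf i)) := by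
          intro h
          rcases Finset.mem_insert.mp h with heq | h
          · have himem : i ∈ (x.cycleOf i).erase j :=
              Finset.mem_erase.mpr ⟨hij, self_mem_cycleOf x i⟩
            rw [← heq] at himem
            exact hij (Finset.mem_singleton.mp himem)
          · exact hjnotZ (Finset.mem_of_mem_erase h)
        rw [Finset.card_insert_of_notMem hn2, Finset.card_insert_of_notMem hn1,
          Finset.card_erase_of_mem hiZ] at hcard
        have hpos : 1 ≤ Z.card := Finset.card_pos.mpr ⟨_, hiZ⟩
        omega
      · have hiZ : x.cycleOf i ∉ Z := by
          intro h
          exact hCz (Finset.mem_filter.mp h).2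
        have hsub : insert ({j} : Finset (Fin n)) Z ⊆ Z' := by
          intro C hC
          rcases Finset.mem_insert.mp hC with rfl | hC
          · exact hjZ'
          · exact hperZ C hC (fun heq => hiZ (heq ▸ hC))
        have hcard := Finset.card_le_card hsub
        rw [Finset.card_insert_of_notMem hjnotZ] at hcard
        omega
    omega
  · -- all cycles stay zero
    intro hzero C hC
    obtain ⟨k, rfl⟩ := mem_cycles.mp hC
    by_cases hk : x.perm.SameCycle i k
    · by_cases hkj : k = j
      · subst hkj
        rw [F2]
        unfold cycWt
        rw [Finset.sum_singleton, F1]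
      · have hsck : x'.perm.SameCycle i k := by
          rw [show x'.perm = x.perm * Equiv.swap i (x.perm i) from rfl]
          exact (hiffs k).mpr ⟨hk, hkj⟩
        rw [← cycleOf_eq_of_sameCycle hsck, F3, F5]
        exact hzero _ (cycleOf_mem_cycles x i)
    · rw [houtside k hk]
      have hi : i ∉ x.cycleOf k := fun h => hk (mem_cycleOf.mp h).symm
      obtain ⟨_, hwt⟩ := F6 _ (cycleOf_mem_cycles x k) hi
      rw [hwt]
      exact hzero _ (cycleOf_mem_cycles x k)

/-! ### peeling and subadditivity -/

lemma diagOne_zero (q : Fin n) : (diagOne q (0 : ZMod m)) = 1 := by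
  ext k
  · simp [diagOne]
  · simp [diagOne]

lemma cycWt_cycleOf_of_perm_one {y : GW m n} (hp : y.perm = 1) (q : Fin n) :
    cycWt y (y.cycleOf q) = y.wt q := by
  have h1 : y.cycleOf q = {q} := (cycleOf_congr (y := (1 : GW m n)) hp q).trans (cycleOf_one q)
  rw [h1]
  unfold cycWt
  rw [Finset.sum_singleton]

lemma peel {y : GW m n} (hy : y ≠ 1) :
    ∃ y' t : GW m n, y = y' * t ∧ c0 y' = c0 y + 1 ∧
      (∀ z : GW m n, c0 z ≤ c0 (z * t) + 1) := by
  by_cases hperm : ∃ i, y.perm i ≠ i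
  · obtain ⟨i, hi⟩ := hperm
    have hij : i ≠ y.perm i := fun h => hi h.symm
    refine ⟨y * swapB i (y.perm i) (-y.wt (y.perm i)), swapB i (y.perm i) (-y.wt (y.perm i)),
      ?_, (split_swapB hi).1, fun z => c0_mul_swapB_ge z hij _⟩
    rw [mul_assoc, swapB_mul_self hij, mul_one]
  · push_neg at hperm
    have hpone : y.perm = 1 := Equiv.ext (fun i => hperm i)
    have hwt : ∃ q, y.wt q ≠ 0 := by
      by_contra hc
      push_neg at hc
      apply hy
      ext k
      · simp [hpone]
      · simp [hc k]
    obtain ⟨q, hq⟩ := hwt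
    refine ⟨y * diagOne q (-y.wt q), diagOne q (y.wt q), ?_, ?_, ?_⟩
    · rw [mul_assoc, diagOne_mul_diagOne, neg_add_cancel, diagOne_zero, mul_one]
    · have h := c0_mul_diagOne y q (-y.wt q)
      rw [cycWt_cycleOf_of_perm_one hpone q] at h
      rw [if_neg hq, if_pos (by ring)] at h
      omega
    · intro z
      have h := c0_mul_diagOne z q (y.wt q)
      split_ifs at h <;> omega

lemma c0_mul_aux : ∀ (k : ℕ) (x y : GW m n), n - c0 y ≤ k → c0 x + c0 y ≤ n + c0 (x * y) := by
  intro k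
  induction k with
  | zero =>
    intro x y hk
    have h1 := c0_le y
    have h2 : c0 y = n := by omega
    rw [c0_eq_n_iff.mp h2, mul_one]
    have := c0_le x
    have hone := c0_one (m := m) (n := n)
    omega
  | succ k ih =>
    intro x y hk
    by_cases hy : y = 1
    · subst hy
      rw [mul_one]
      have := c0_le x
      have := c0_one (n := n) (m := m)
      omega
    · obtain ⟨y', t, hfac, hc0, hcost⟩ := peel hy
      have h1 : n - c0 y' ≤ k := by
        have := c0_le y'
        omega
      have h2 := ih x y' h1
      have h3 : x * y = (x * y') * t := by rw [hfac, mul_assoc]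
      have h4 := hcost (x * y')
      rw [← h3] at h4
      omega

lemma c0_mul (x y : GW m n) : c0 x + c0 y ≤ n + c0 (x * y) :=
  c0_mul_aux (n - c0 y) x y le_rfl

lemma codimfix_mul_le (x y : GW m n) : codimfix (x * y) ≤ codimfix x + codimfix y := by
  have := c0_mul x y
  have := c0_le x
  have := c0_le y
  have := c0_le (x * y)
  unfold codimfix
  omega

lemma codimfix_list_prod_le (l : List (GW m n)) (h : ∀ t ∈ l, codimfix t = 1) :
    codimfix l.prod ≤ l.length := by
  induction l with
  | nil => simp [codimfix_one]
  | cons a l ih =>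
    rw [List.prod_cons]
    calc codimfix (a * l.prod) ≤ codimfix a + codimfix l.prod := codimfix_mul_le _ _
    _ ≤ 1 + l.length := by
        rw [h a (List.mem_cons_self)]
        exact Nat.add_le_add_left (ih (fun t ht => h t (List.mem_cons_of_mem a ht))) 1
    _ = (a :: l).length := by simp [add_comm]

/-! ### membership in G(m,p,n) -/

lemma Gmem_one {p : ℕ} {hpm : p ∣ m} : Gmem p hpm (1 : GW m n) := by
  unfold Gmem
  rw [wtTot_one, map_zero]

lemma Gmem_mul {p : ℕ} {hpm : p ∣ m} {x y : GW m n} (hx : Gmem p hpm x) (hy : Gmem p hpm y) :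
    Gmem p hpm (x * y) := by
  unfold Gmem at *
  rw [wtTot_mul, map_add, hx, hy, add_zero]

lemma Gmem_inv {p : ℕ} {hpm : p ∣ m} {x : GW m n} (hx : Gmem p hpm x) : Gmem p hpm x⁻¹ := by
  unfold Gmem at *
  rw [wtTot_inv, map_neg, hx, neg_zero]

lemma Gmem_swapB {p : ℕ} {hpm : p ∣ m} {i j : Fin n} (hij : i ≠ j) (β : ZMod m) :
    Gmem p hpm (swapB i j β) := by
  unfold Gmem
  rw [wtTot_swapB hij, map_zero]

lemma IsRefl_swapB {p : ℕ} {hpm : p ∣ m} {i j : Fin n} (hij : i ≠ j) (β : ZMod m) :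
    IsRefl p hpm (swapB i j β) :=
  ⟨Gmem_swapB hij β, codimfix_swapB hij β⟩

lemma IsRefl_diagOne {p : ℕ} {hpm : p ∣ m} {q : Fin n} {c : ZMod m} (hc : c ≠ 0)
    (hcast : ZMod.castHom hpm (ZMod p) c = 0) : IsRefl p hpm (diagOne q c) := by
  constructor
  · unfold Gmem
    rw [wtTot_diagOne, hcast]
  · exact codimfix_diagOne hc

lemma Gmem_list_prod {p : ℕ} {hpm : p ∣ m} (l : List (GW m n))
    (h : ∀ t ∈ l, Gmem p hpm t) : Gmem p hpm l.prod := by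
  induction l with
  | nil => exact Gmem_one
  | cons a l ih =>
    rw [List.prod_cons]
    exact Gmem_mul (h a (List.mem_cons_self))
      (ih (fun t ht => h t (List.mem_cons_of_mem a ht)))

/-! ### reflection length -/

lemma codimfix_le_lR {p : ℕ} {hpm : p ∣ m} {w : GW m n}
    (hex : ∃ l : List (GW m n), (∀ t ∈ l, IsRefl p hpm t) ∧ l.prod = w) :
    codimfix w ≤ lR p hpm w := by
  apply le_csInf
  · obtain ⟨l, hl, hprod⟩ := hex
    exact ⟨l.length, l, hl, rfl, hprod⟩
  · rintro k ⟨l, hl, hlen, hprod⟩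
    rw [← hprod, ← hlen]
    exact codimfix_list_prod_le l (fun t ht => (hl t ht).2)

lemma lR_le {p : ℕ} {hpm : p ∣ m} {w : GW m n} {l : List (GW m n)}
    (hl : ∀ t ∈ l, IsRefl p hpm t) (hprod : l.prod = w) : lR p hpm w ≤ l.length :=
  Nat.sInf_le ⟨l, hl, rfl, hprod⟩

lemma lR_eq_codimfix {p : ℕ} {hpm : p ∣ m} {w : GW m n}
    (hex : ∃ l : List (GW m n), (∀ t ∈ l, IsRefl p hpm t) ∧ l.length = codimfix w ∧ l.prod = w) :
    lR p hpm w = codimfix w := by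
  obtain ⟨l, hl, hlen, hprod⟩ := hex
  exact le_antisymm (hlen ▸ lR_le hl hprod) (codimfix_le_lR ⟨l, hl, hprod⟩)

/-! ### nonzero-weight cycles and factorizations -/

def nzCycles (x : GW m n) : Finset (Finset (Fin n)) :=
  x.cycles.filter fun C => cycWt x C ≠ 0

lemma c0_add_nz (x : GW m n) : c0 x + (nzCycles x).card = numCycles x := by
  unfold c0 nzCycles numCycles
  exact Finset.card_filter_add_card_filter_not _

lemma sum_nzCycles (x : GW m n) : ∑ C ∈ nzCycles x, cycWt x C = wtTot x := by
  unfold nzCycles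
  rw [Finset.sum_filter_ne_zero, sum_cycWt]

lemma perm_mem_cycle {x : GW m n} {C : Finset (Fin n)} (hC : C ∈ x.cycles) (q : Fin n) :
    x.perm q ∈ C ↔ q ∈ C := by
  constructor
  · intro h
    have h1 : C = x.cycleOf (x.perm q) := cycleOf_eq_of_mem hC h
    rw [h1, ← cycleOf_eq_of_sameCycle (x := x) (i := q) (j := x.perm q) ⟨1, by simp⟩]
    exact self_mem_cycleOf x q
  · intro h
    have h1 : C = x.cycleOf q := cycleOf_eq_of_mem hC h
    rw [h1]
    exact mem_cycleOf.mpr ⟨1, by simp⟩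

lemma cycWt_mul_diagOne (x : GW m n) (q : Fin n) (c : ZMod m) {C : Finset (Fin n)}
    (hC : C ∈ x.cycles) :
    cycWt (x * diagOne q c) C = cycWt x C + (if q ∈ C then c else 0) := by
  unfold cycWt
  rw [Finset.sum_congr rfl (fun k _ => mul_diagOne_wt x q c k), Finset.sum_add_distrib]
  congr 1
  rw [Finset.sum_ite_eq' C (x.perm q) (fun _ => c)]
  by_cases h : q ∈ C
  · rw [if_pos h, if_pos ((perm_mem_cycle hC q).mpr h)]
  · rw [if_neg h, if_neg (fun hc => h ((perm_mem_cycle hC q).mp hc))]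

lemma zero_out {x : GW m n} {C : Finset (Fin n)} (hC : C ∈ x.cycles) {q : Fin n} (hq : q ∈ C) :
    (x * diagOne q (-(cycWt x C))).cycles = x.cycles ∧
      (∀ C' ∈ x.cycles, cycWt (x * diagOne q (-(cycWt x C))) C'
        = if C' = C then 0 else cycWt x C') ∧
      (cycWt x C ≠ 0 → c0 (x * diagOne q (-(cycWt x C))) = c0 x + 1) := by
  have hcyc : (x * diagOne q (-(cycWt x C))).cycles = x.cycles :=
    cycles_congr (mul_diagOne_perm x q _)
  have hwts : ∀ C' ∈ x.cycles, cycWt (x * diagOne q (-(cycWt x C))) C'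
      = if C' = C then 0 else cycWt x C' := by
    intro C' hC'
    rw [cycWt_mul_diagOne x q _ hC']
    by_cases h : C' = C
    · subst h
      rw [if_pos rfl, if_pos hq]
      ring
    · have hqn : q ∉ C' := fun hqc => h ((cycleOf_eq_of_mem hC' hqc).trans
        (cycleOf_eq_of_mem hC hq).symm)
      rw [if_neg h, if_neg hqn, add_zero]
  refine ⟨hcyc, hwts, fun hne => ?_⟩
  have h := c0_mul_diagOne x q (-(cycWt x C))
  rw [← cycleOf_eq_of_mem hC hq] at h
  rw [if_neg hne, if_pos (by ring)] at h
  omega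

lemma upper_zero_aux : ∀ (k : ℕ) (x : GW m n), codimfix x ≤ k →
    (∀ C ∈ x.cycles, cycWt x C = 0) →
    ∃ l : List (GW m n), (∀ t ∈ l, ∃ i j β, i ≠ j ∧ t = swapB i j β) ∧
      l.length = codimfix x ∧ l.prod = x := by
  intro k
  induction k with
  | zero =>
    intro x hk hzero
    have hx1 : x = 1 := codimfix_eq_zero_iff.mp (by omega)
    exact ⟨[], by simp, by simp [hx1, codimfix_one], by simp [hx1]⟩
  | succ k ih =>
    intro x hk hzero
    by_cases hx1 : x = 1
    · exact ⟨[], by simp, by simp [hx1, codimfix_one], by simp [hx1]⟩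
    · have hmove : ∃ i, x.perm i ≠ i := by
        by_contra hc
        push_neg at hc
        apply hx1
        have hpone : x.perm = 1 := Equiv.ext (fun i => hc i)
        ext q
        · simp [hc q]
        · have := hzero _ (cycleOf_mem_cycles x q)
          rw [cycWt_cycleOf_of_perm_one hpone q] at this
          simpa using this
      obtain ⟨i, hi⟩ := hmove
      have hij : i ≠ x.perm i := fun h => hi h.symm
      set t := swapB i (x.perm i) (-x.wt (x.perm i)) with htdef
      obtain ⟨hc0, hzero'⟩ := split_swapB hi
      set x' := x * t with hx'def
      have hxx : x = x' * t := by
        rw [hx'def, mul_assoc, swapB_mul_self hij, mul_one]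
      have hcdf : codimfix x' + 1 = codimfix x := by
        unfold codimfix
        have h1 := c0_le x'
        have h2 : codimfix x ≠ 0 := fun h => hx1 (codimfix_eq_zero_iff.mp h)
        unfold codimfix at h2
        omega
      obtain ⟨l', hl', hlen', hprod'⟩ := ih x' (by omega) (hzero' hzero)
      refine ⟨l' ++ [t], ?_, ?_, ?_⟩
      · intro s hs
        rcases List.mem_append.mp hs with hs | hs
        · exact hl' s hs
        · rw [List.mem_singleton.mp hs]
          exact ⟨i, x.perm i, -x.wt (x.perm i), hij, rfl⟩
      · rw [List.length_append, hlen', List.length_singleton, hcdf]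
      · rw [List.prod_append, hprod', List.prod_singleton, ← hxx]

/-! ### removing cycles by diagonal factors -/

lemma swapB_zero_wt (q q' : Fin n) (k : Fin n) : (swapB q q' (0 : ZMod m)).wt k = 0 := by
  show (if k = q then (0 : ZMod m) else if k = q' then -0 else 0) = 0
  split_ifs <;> simp

lemma diag_pair_cancel {q q' : Fin n} (hqq' : q ≠ q') (a : ZMod m) :
    diagOne q (-a) * diagOne q' a * (swapB q q' a * swapB q q' 0) = 1 := by
  ext k
  · have hp : ((diagOne q (-a) * diagOne q' a * (swapB q q' a * swapB q q' 0)).perm) k = k := by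
      simp [diagOne, swapB, Equiv.swap_apply_self]
    simp [hp]
  · simp only [mul_wt, one_wt, mul_perm, diagOne_perm, one_mul, mul_one, inv_one,
      Equiv.Perm.one_apply, diagOne_wt, swapB_zero_wt, add_zero, swapB_perm]
    rw [swapB_wt_eq hqq']
    split_ifs <;> ring

lemma diag_cancel (q : Fin n) (a : ZMod m) :
    diagOne q (-a) * diagOne q a = 1 := by
  rw [diagOne_mul_diagOne, neg_add_cancel, diagOne_zero]

/-- Removing one zero-`p`-weight cycle. -/
lemma remove_single {x : GW m n} {C : Finset (Fin n)} (hC : C ∈ x.cycles) {q : Fin n}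
    (hq : q ∈ C) (ha : cycWt x C ≠ 0) :
    ∃ x' : GW m n, x = x' * diagOne q (cycWt x C) ∧
      x'.cycles = x.cycles ∧
      (∀ C' ∈ x.cycles, cycWt x' C' = if C' = C then 0 else cycWt x C') ∧
      c0 x' = c0 x + 1 ∧ codimfix x' + 1 = codimfix x := by
  obtain ⟨hcyc, hwts, hc0⟩ := zero_out hC hq
  refine ⟨x * diagOne q (-(cycWt x C)), ?_, hcyc, hwts, hc0 ha, ?_⟩
  · rw [mul_assoc, diag_cancel, mul_one]
  · have h1 := c0_le (x * diagOne q (-(cycWt x C)))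
    have h2 := hc0 ha
    unfold codimfix
    omega

/-- Removing a pair of cycles whose weights cancel. -/
lemma remove_pair {x : GW m n} {C C' : Finset (Fin n)} (hC : C ∈ x.cycles) (hC' : C' ∈ x.cycles)
    (hne : C' ≠ C) {q q' : Fin n} (hq : q ∈ C) (hq' : q' ∈ C')
    (ha : cycWt x C ≠ 0) (hsum : cycWt x C + cycWt x C' = 0) :
    ∃ x' : GW m n,
      x = x' * (swapB q q' (cycWt x C) * swapB q q' 0) ∧
      x'.cycles = x.cycles ∧
      (∀ C'' ∈ x.cycles, cycWt x' C''
        = if C'' = C' then 0 else if C'' = C then 0 else cycWt x C'') ∧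
      c0 x' = c0 x + 2 ∧ codimfix x' + 2 = codimfix x := by
  have hqq' : q ≠ q' := by
    intro h
    subst h
    exact hne ((cycleOf_eq_of_mem hC' hq').trans (cycleOf_eq_of_mem hC hq).symm)
  obtain ⟨hcyc1, hwts1, hc01⟩ := zero_out hC hq
  have hC'1 : C' ∈ (x * diagOne q (-(cycWt x C))).cycles := by rw [hcyc1]; exact hC'
  have hwtC' : cycWt (x * diagOne q (-(cycWt x C))) C' = -(cycWt x C) := by
    have h := hwts1 C' hC'
    rw [if_neg hne] at h
    rw [h]
    linear_combination hsum
  obtain ⟨hcyc2, hwts2, hc02⟩ := zero_out hC'1 hq'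
  have hprep : -(cycWt (x * diagOne q (-(cycWt x C))) C') = cycWt x C := by rw [hwtC']; ring
  rw [hprep] at hcyc2 hwts2 hc02
  have hC'ne : cycWt (x * diagOne q (-(cycWt x C))) C' ≠ 0 := by
    rw [hwtC']
    intro hcon
    exact ha (by linear_combination hcon.symm)
  have hc0' : c0 (x * diagOne q (-(cycWt x C)) * diagOne q' (cycWt x C)) = c0 x + 2 := by
    rw [hc02 hC'ne, hc01 ha]
  refine ⟨x * diagOne q (-(cycWt x C)) * diagOne q' (cycWt x C), ?_, ?_, ?_, hc0', ?_⟩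
  · rw [mul_assoc, mul_assoc, ← mul_assoc (diagOne q (-(cycWt x C))),
      diag_pair_cancel hqq' (cycWt x C), mul_one]
  · rw [hcyc2, hcyc1]
  · intro C'' hC''
    have h2 := hwts2 C'' (by rw [hcyc1]; exact hC'')
    have h1 := hwts1 C'' hC''
    rw [h1] at h2
    exact h2
  · have h1 := c0_le (x * diagOne q (-(cycWt x C)) * diagOne q' (cycWt x C))
    unfold codimfix
    omega

lemma nz_after_removal {x x' : GW m n} (hcyc : x'.cycles = x.cycles)
    (S : Finset (Finset (Fin n)))
    (hwts : ∀ C' ∈ x.cycles, cycWt x' C' = if C' ∈ S then 0 else cycWt x C') :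
    nzCycles x' = nzCycles x \ S := by
  ext C''
  simp only [nzCycles, Finset.mem_filter, Finset.mem_sdiff]
  constructor
  · rintro ⟨hm, hw⟩
    rw [hcyc] at hm
    have := hwts C'' hm
    by_cases h : C'' ∈ S
    · rw [if_pos h] at this
      exact absurd this hw
    · rw [if_neg h] at this
      exact ⟨⟨hm, by rw [← this]; exact hw⟩, h⟩
  · rintro ⟨⟨hm, hw⟩, hns⟩
    have := hwts C'' hm
    rw [if_neg hns] at this
    exact ⟨by rw [hcyc]; exact hm, by rw [this]; exact hw⟩

lemma upper_of_nz_empty {p : ℕ} {hpm : p ∣ m} (x : GW m n) (h : nzCycles x = ∅) :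
    ∃ l : List (GW m n), (∀ t ∈ l, IsRefl p hpm t) ∧ l.length = codimfix x ∧ l.prod = x := by
  have hzero : ∀ C ∈ x.cycles, cycWt x C = 0 := by
    intro C hC
    by_contra hne
    have : C ∈ nzCycles x := Finset.mem_filter.mpr ⟨hC, hne⟩
    rw [h] at this
    exact absurd this (Finset.notMem_empty C)
  obtain ⟨l, hl, hlen, hprod⟩ := upper_zero_aux (codimfix x) x le_rfl hzero
  exact ⟨l, fun t ht => by
    obtain ⟨i, j, β, hij, rfl⟩ := hl t ht
    exact IsRefl_swapB hij β, hlen, hprod⟩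

lemma mem_nz_iff {x : GW m n} {C : Finset (Fin n)} :
    C ∈ nzCycles x ↔ C ∈ x.cycles ∧ cycWt x C ≠ 0 := Finset.mem_filter

lemma upper_aux {p : ℕ} {hpm : p ∣ m} : ∀ (k : ℕ) (x : GW m n), (nzCycles x).card ≤ k →
    ∀ π : Finset (Fin n) → Finset (Fin n),
    (∀ C ∈ nzCycles x, π C ∈ nzCycles x ∧ π (π C) = C ∧
      (π C = C → ZMod.castHom hpm (ZMod p) (cycWt x C) = 0) ∧
      (π C ≠ C → cycWt x C + cycWt x (π C) = 0)) →
    ∃ l : List (GW m n), (∀ t ∈ l, IsRefl p hpm t) ∧ l.length = codimfix x ∧ l.prod = x := by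
  intro k
  induction k with
  | zero =>
    intro x hk π hπ
    exact upper_of_nz_empty x (Finset.card_eq_zero.mp (Nat.le_zero.mp hk))
  | succ k ih =>
    intro x hk π hπ
    rcases Finset.eq_empty_or_nonempty (nzCycles x) with hemp | ⟨C, hCnz⟩
    · exact upper_of_nz_empty x hemp
    · have hCmem : C ∈ x.cycles := (mem_nz_iff.mp hCnz).1
      have hCa : cycWt x C ≠ 0 := (mem_nz_iff.mp hCnz).2
      obtain ⟨q, hq⟩ := cycles_nonempty hCmem
      obtain ⟨hπ1, hπ2, hπ3, hπ4⟩ := hπ C hCnz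
      by_cases hfix : π C = C
      · obtain ⟨x', hfac, hcyc, hwts, hc0, hcdf⟩ := remove_single hCmem hq hCa
        have hwts' : ∀ C' ∈ x.cycles,
            cycWt x' C' = if C' ∈ ({C} : Finset (Finset (Fin n))) then 0 else cycWt x C' := by
          intro C' hC'
          rw [hwts C' hC']
          simp only [Finset.mem_singleton]
        have hnz := nz_after_removal hcyc {C} hwts'
        have hπ' : ∀ C'' ∈ nzCycles x', π C'' ∈ nzCycles x' ∧ π (π C'') = C'' ∧
            (π C'' = C'' → ZMod.castHom hpm (ZMod p) (cycWt x' C'') = 0) ∧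
            (π C'' ≠ C'' → cycWt x' C'' + cycWt x' (π C'') = 0) := by
          intro C'' hC''
          rw [hnz, Finset.mem_sdiff, Finset.mem_singleton] at hC''
          obtain ⟨hC''nz, hC''neC⟩ := hC''
          obtain ⟨g1, g2, g3, g4⟩ := hπ C'' hC''nz
          have hπne : π C'' ≠ C := by
            intro hcon
            apply hC''neC
            rw [← g2, hcon, hfix]
          have e1 : cycWt x' C'' = cycWt x C'' := by
            rw [hwts _ (mem_nz_iff.mp hC''nz).1, if_neg hC''neC]
          have e2 : cycWt x' (π C'') = cycWt x (π C'') := by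
            rw [hwts _ (mem_nz_iff.mp g1).1, if_neg hπne]
          refine ⟨?_, g2, fun h => by rw [e1]; exact g3 h, fun h => by rw [e1, e2]; exact g4 h⟩
          rw [hnz, Finset.mem_sdiff, Finset.mem_singleton]
          exact ⟨g1, hπne⟩
        have hcard : (nzCycles x').card ≤ k := by
          rw [hnz, Finset.sdiff_singleton_eq_erase, Finset.card_erase_of_mem hCnz]
          omega
        obtain ⟨l', hl', hlen', hprod'⟩ := ih x' hcard π hπ'
        refine ⟨l' ++ [diagOne q (cycWt x C)], ?_, ?_, ?_⟩
        · intro t ht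
          rcases List.mem_append.mp ht with ht | ht
          · exact hl' t ht
          · rw [List.mem_singleton.mp ht]
            exact IsRefl_diagOne hCa (hπ3 hfix)
        · rw [List.length_append, hlen', List.length_singleton, hcdf]
        · rw [List.prod_append, hprod', List.prod_singleton, ← hfac]
      · have hC'nz : π C ∈ nzCycles x := hπ1
        have hC'mem : π C ∈ x.cycles := (mem_nz_iff.mp hC'nz).1
        obtain ⟨q', hq'⟩ := cycles_nonempty hC'mem
        have hsum := hπ4 hfix
        have hqq' : q ≠ q' := by
          intro h
          subst h
          exact hfix ((cycleOf_eq_of_mem hC'mem hq').trans (cycleOf_eq_of_mem hCmem hq).symm)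
        obtain ⟨x', hfac, hcyc, hwts, hc0, hcdf⟩ := remove_pair hCmem hC'mem hfix hq hq' hCa hsum
        have hwts' : ∀ C₁ ∈ x.cycles,
            cycWt x' C₁ = if C₁ ∈ ({C, π C} : Finset (Finset (Fin n))) then 0
              else cycWt x C₁ := by
          intro C₁ h₁
          rw [hwts C₁ h₁]
          by_cases e1 : C₁ = π C
          · simp [e1]
          · by_cases e2 : C₁ = C
            · simp [e1, e2]
            · simp [e1, e2]
        have hnz := nz_after_removal hcyc {C, π C} hwts'
        have hπ' : ∀ C'' ∈ nzCycles x', π C'' ∈ nzCycles x' ∧ π (π C'') = C'' ∧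
            (π C'' = C'' → ZMod.castHom hpm (ZMod p) (cycWt x' C'') = 0) ∧
            (π C'' ≠ C'' → cycWt x' C'' + cycWt x' (π C'') = 0) := by
          intro C'' hC''
          rw [hnz, Finset.mem_sdiff, Finset.mem_insert, Finset.mem_singleton] at hC''
          obtain ⟨hC''nz, hC''ne⟩ := hC''
          push_neg at hC''ne
          obtain ⟨hne1, hne2⟩ := hC''ne
          obtain ⟨g1, g2, g3, g4⟩ := hπ C'' hC''nz
          have hπne1 : π C'' ≠ C := by
            intro hcon
            apply hne2
            rw [← g2, hcon]
          have hπne2 : π C'' ≠ π C := by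
            intro hcon
            apply hne1
            rw [← g2, hcon, hπ2]
          have e1 : cycWt x' C'' = cycWt x C'' := by
            rw [hwts _ (mem_nz_iff.mp hC''nz).1, if_neg hne2, if_neg hne1]
          have e2 : cycWt x' (π C'') = cycWt x (π C'') := by
            rw [hwts _ (mem_nz_iff.mp g1).1, if_neg hπne2, if_neg hπne1]
          refine ⟨?_, g2, fun h => by rw [e1]; exact g3 h, fun h => by rw [e1, e2]; exact g4 h⟩
          rw [hnz, Finset.mem_sdiff, Finset.mem_insert, Finset.mem_singleton]
          exact ⟨g1, by push_neg; exact ⟨hπne1, hπne2⟩⟩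
        have hcard : (nzCycles x').card ≤ k := by
          rw [hnz]
          have hsubs : ({C, π C} : Finset (Finset (Fin n))) ⊆ nzCycles x := by
            intro D hD
            rcases Finset.mem_insert.mp hD with rfl | hD
            · exact hCnz
            · rw [Finset.mem_singleton.mp hD]; exact hC'nz
          rw [Finset.card_sdiff_of_subset hsubs]
          have h2 : ({C, π C} : Finset (Finset (Fin n))).card = 2 := by
            rw [Finset.card_insert_of_notMem (by simpa using (Ne.symm hfix)), Finset.card_singleton]
          have hpos : 2 ≤ (nzCycles x).card := by
            rw [← h2]
            exact Finset.card_le_card hsubs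
          omega
        obtain ⟨l', hl', hlen', hprod'⟩ := ih x' hcard π hπ'
        refine ⟨l' ++ [swapB q q' (cycWt x C), swapB q q' 0], ?_, ?_, ?_⟩
        · intro t ht
          rcases List.mem_append.mp ht with ht | ht
          · exact hl' t ht
          · rcases List.mem_cons.mp ht with rfl | ht
            · exact IsRefl_swapB hqq' _
            · rw [List.mem_singleton.mp ht]
              exact IsRefl_swapB hqq' _
        · rw [List.length_append, hlen']
          show codimfix x' + 2 = codimfix x
          exact hcdf
        · rw [List.prod_append, hprod']
          have : [swapB q q' (cycWt x C), swapB q q' 0].prod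
              = swapB q q' (cycWt x C) * swapB q q' 0 := by
            rw [List.prod_cons, List.prod_singleton]
          rw [this, ← hfac]

lemma upper {p : ℕ} {hpm : p ∣ m} (x : GW m n)
    (π : Finset (Fin n) → Finset (Fin n))
    (hπ : ∀ C ∈ nzCycles x, π C ∈ nzCycles x ∧ π (π C) = C ∧
      (π C = C → ZMod.castHom hpm (ZMod p) (cycWt x C) = 0) ∧
      (π C ≠ C → cycWt x C + cycWt x (π C) = 0)) :
    lR p hpm x = codimfix x := by
  apply lR_eq_codimfix
  obtain ⟨l, h1, h2, h3⟩ := upper_aux (nzCycles x).card x le_rfl π hπ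
  exact ⟨l, h1, h2, h3⟩

lemma remove_shift {x : GW m n} {C C' : Finset (Fin n)} (hC : C ∈ x.cycles) (hC' : C' ∈ x.cycles)
    (hne : C' ≠ C) {q q' : Fin n} (hq : q ∈ C) (hq' : q' ∈ C') :
    ∃ x' : GW m n,
      x = x' * (swapB q q' (cycWt x C) * swapB q q' 0) ∧
      x'.cycles = x.cycles ∧
      (∀ C'' ∈ x.cycles, cycWt x' C''
        = if C'' = C then 0 else if C'' = C' then cycWt x C' + cycWt x C else cycWt x C'') ∧
      wtTot x' = wtTot x := by
  have hqq' : q ≠ q' := by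
    intro h
    subst h
    exact hne ((cycleOf_eq_of_mem hC' hq').trans (cycleOf_eq_of_mem hC hq).symm)
  obtain ⟨hcyc1, hwts1, _⟩ := zero_out hC hq
  refine ⟨x * diagOne q (-(cycWt x C)) * diagOne q' (cycWt x C), ?_, ?_, ?_, ?_⟩
  · rw [mul_assoc, mul_assoc, ← mul_assoc (diagOne q (-(cycWt x C))),
      diag_pair_cancel hqq' (cycWt x C), mul_one]
  · rw [cycles_congr (mul_diagOne_perm _ q' _), hcyc1]
  · intro C'' hC''
    have h1 := hwts1 C'' hC''
    have hC''1 : C'' ∈ (x * diagOne q (-(cycWt x C))).cycles := by rw [hcyc1]; exact hC''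
    rw [cycWt_mul_diagOne _ q' _ hC''1, h1]
    by_cases e2 : C'' = C'
    · subst e2
      rw [if_pos hq', if_neg hne, if_neg hne, if_pos rfl]
    · have hq'n : q' ∉ C'' := fun hcon =>
        e2 ((cycleOf_eq_of_mem hC'' hcon).trans (cycleOf_eq_of_mem hC' hq').symm)
      rw [if_neg hq'n, add_zero, if_neg e2]
  · rw [wtTot_mul, wtTot_mul, wtTot_diagOne, wtTot_diagOne]
    ring

lemma Gmem_of_fac_diag {p : ℕ} {hpm : p ∣ m} {x x' : GW m n} {q : Fin n} {a : ZMod m}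
    (hfac : x = x' * diagOne q a) (hx : Gmem p hpm x)
    (hcast : ZMod.castHom hpm (ZMod p) a = 0) : Gmem p hpm x' := by
  unfold Gmem at *
  have h1 : wtTot x = wtTot x' + a := by rw [hfac, wtTot_mul, wtTot_diagOne]
  rw [h1, map_add, hcast, add_zero] at hx
  exact hx

lemma gen_aux {p : ℕ} {hpm : p ∣ m} : ∀ (k : ℕ) (x : GW m n), (nzCycles x).card ≤ k →
    Gmem p hpm x → ∃ l : List (GW m n), (∀ t ∈ l, IsRefl p hpm t) ∧ l.prod = x := by
  intro k
  induction k with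
  | zero =>
    intro x hk _
    obtain ⟨l, h1, _, h3⟩ :=
      upper_of_nz_empty (p := p) (hpm := hpm) x (Finset.card_eq_zero.mp (Nat.le_zero.mp hk))
    exact ⟨l, h1, h3⟩
  | succ k ih =>
    intro x hk hx
    rcases Finset.eq_empty_or_nonempty (nzCycles x) with hemp | ⟨C, hCnz⟩
    · obtain ⟨l, h1, _, h3⟩ := upper_of_nz_empty (p := p) (hpm := hpm) x hemp
      exact ⟨l, h1, h3⟩
    · have hCmem : C ∈ x.cycles := (mem_nz_iff.mp hCnz).1
      have hCa : cycWt x C ≠ 0 := (mem_nz_iff.mp hCnz).2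
      obtain ⟨q, hq⟩ := cycles_nonempty hCmem
      by_cases hone : (nzCycles x).card = 1
      · have hnzC : nzCycles x = {C} := by
          obtain ⟨D, hD⟩ := Finset.card_eq_one.mp hone
          rw [hD]
          rw [hD] at hCnz
          rw [Finset.mem_singleton.mp hCnz]
        have hcast : ZMod.castHom hpm (ZMod p) (cycWt x C) = 0 := by
          have hsum := sum_nzCycles x
          rw [hnzC, Finset.sum_singleton] at hsum
          rw [hsum]
          exact hx
        obtain ⟨x', hfac, hcyc, hwts, _, _⟩ := remove_single hCmem hq hCa
        have hwts' : ∀ C' ∈ x.cycles,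
            cycWt x' C' = if C' ∈ ({C} : Finset (Finset (Fin n))) then 0 else cycWt x C' := by
          intro C' hC'
          rw [hwts C' hC']
          simp only [Finset.mem_singleton]
        have hnz := nz_after_removal hcyc {C} hwts'
        have hcard : (nzCycles x').card ≤ k := by
          rw [hnz, hnzC]
          simp
        have hx' : Gmem p hpm x' := Gmem_of_fac_diag hfac hx hcast
        obtain ⟨l', hl', hprod'⟩ := ih x' hcard hx'
        refine ⟨l' ++ [diagOne q (cycWt x C)], ?_, ?_⟩
        · intro t ht
          rcases List.mem_append.mp ht with ht | ht
          · exact hl' t ht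
          · rw [List.mem_singleton.mp ht]
            exact IsRefl_diagOne hCa hcast
        · rw [List.prod_append, hprod', List.prod_singleton, ← hfac]
      · have hcpos : 1 ≤ ((nzCycles x).erase C).card := by
          rw [Finset.card_erase_of_mem hCnz]
          have : 1 ≤ (nzCycles x).card := Finset.card_pos.mpr ⟨C, hCnz⟩
          omega
        obtain ⟨C', hC'er⟩ := Finset.card_pos.mp hcpos
        have hne : C' ≠ C := (Finset.mem_erase.mp hC'er).1
        have hC'nz : C' ∈ nzCycles x := Finset.mem_of_mem_erase hC'er
        have hC'mem : C' ∈ x.cycles := (mem_nz_iff.mp hC'nz).1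
        obtain ⟨q', hq'⟩ := cycles_nonempty hC'mem
        have hqq' : q ≠ q' := by
          intro h
          subst h
          exact hne ((cycleOf_eq_of_mem hC'mem hq').trans (cycleOf_eq_of_mem hCmem hq).symm)
        obtain ⟨x', hfac, hcyc, hwts, hTot⟩ := remove_shift hCmem hC'mem hne hq hq'
        have hx' : Gmem p hpm x' := by
          unfold Gmem at *
          rw [hTot]
          exact hx
        have hsub : nzCycles x' ⊆ (nzCycles x).erase C := by
          intro D hD
          obtain ⟨hDm, hDw⟩ := mem_nz_iff.mp hD
          rw [hcyc] at hDm
          have hwD := hwts D hDm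
          by_cases e1 : D = C
          · rw [if_pos e1] at hwD
            exact absurd hwD hDw
          · rw [if_neg e1] at hwD
            refine Finset.mem_erase.mpr ⟨e1, ?_⟩
            by_cases e2 : D = C'
            · rw [e2]; exact hC'nz
            · rw [if_neg e2] at hwD
              exact mem_nz_iff.mpr ⟨hDm, by rw [← hwD]; exact hDw⟩
        have hcard : (nzCycles x').card ≤ k := by
          have h1 := Finset.card_le_card hsub
          rw [Finset.card_erase_of_mem hCnz] at h1
          omega
        obtain ⟨l', hl', hprod'⟩ := ih x' hcard hx'
        refine ⟨l' ++ [swapB q q' (cycWt x C), swapB q q' 0], ?_, ?_⟩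
        · intro t ht
          rcases List.mem_append.mp ht with ht | ht
          · exact hl' t ht
          · rcases List.mem_cons.mp ht with rfl | ht
            · exact IsRefl_swapB hqq' _
            · rw [List.mem_singleton.mp ht]
              exact IsRefl_swapB hqq' _
        · rw [List.prod_append, hprod']
          have h2 : [swapB q q' (cycWt x C), swapB q q' 0].prod
              = swapB q q' (cycWt x C) * swapB q q' 0 := by
            rw [List.prod_cons, List.prod_singleton]
          rw [h2, ← hfac]

lemma gen {p : ℕ} {hpm : p ∣ m} (x : GW m n) (hx : Gmem p hpm x) :
    ∃ l : List (GW m n), (∀ t ∈ l, IsRefl p hpm t) ∧ l.prod = x :=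
  gen_aux (nzCycles x).card x le_rfl hx

/-! ### the weight-matching injection for tight factorizations -/

lemma update_cycWt {x x' : GW m n} {q : Fin n} {c : ZMod m}
    (hperm : x'.perm = x.perm)
    (hwt : ∀ k, x'.wt k = x.wt k + (if k = q then c else 0)) :
    ∀ C ∈ x.cycles, cycWt x' C = cycWt x C + (if q ∈ C then c else 0) := by
  intro C hC
  unfold cycWt
  rw [Finset.sum_congr rfl (fun k _ => hwt k), Finset.sum_add_distrib]
  congr 1
  exact Finset.sum_ite_eq' C q (fun _ => c)

lemma diag_conj (u : GW m n) (q : Fin n) (c : ZMod m) :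
    u * diagOne q c = diagOne (u.perm q) c * u := by
  ext k
  · simp [diagOne]
  · rw [mul_diagOne_wt]
    simp only [mul_wt, diagOne_wt, diagOne_perm, inv_one, Equiv.Perm.one_apply]
    ring

lemma diagL_perm (x : GW m n) (q : Fin n) (c : ZMod m) : (diagOne q c * x).perm = x.perm := by
  simp

lemma diagL_wt (x : GW m n) (q : Fin n) (c : ZMod m) (k : Fin n) :
    (diagOne q c * x).wt k = x.wt k + (if k = q then c else 0) := by
  simp only [mul_wt, diagOne_wt, diagOne_perm, inv_one, Equiv.Perm.one_apply]
  ring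

lemma c0_diagOne {q : Fin n} {c : ZMod m} (hc : c ≠ 0) :
    c0 (diagOne q c : GW m n) = n - 1 := by
  have h := codimfix_diagOne (q := q) hc
  have h2 := c0_le (diagOne q c : GW m n)
  unfold codimfix at h
  omega

lemma htight_c0 {u v : GW m n} (htight : codimfix u + codimfix v = codimfix (u * v)) :
    c0 u + c0 v = n + c0 (u * v) := by
  have h1 := c0_le u
  have h2 := c0_le v
  have h3 := c0_le (u * v)
  have h4 := c0_mul u v
  unfold codimfix at htight
  omega

lemma one_le_n (u : GW m n) (q : Fin n) : 1 ≤ n := by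
  have h3 : 1 ≤ numCycles u := Finset.card_pos.mpr ⟨_, cycleOf_mem_cycles u q⟩
  have h4 := numCycles_le u
  omega

lemma tight_wt {u v : GW m n} (htight : codimfix u + codimfix v = codimfix (u * v))
    {C : Finset (Fin n)} (hC : C ∈ nzCycles u) {q : Fin n} (hq : q ∈ C) :
    cycWt (u * v) ((u * v).cycleOf (u.perm q)) = cycWt u C := by
  have hCmem : C ∈ u.cycles := (mem_nz_iff.mp hC).1
  have ha : cycWt u C ≠ 0 := (mem_nz_iff.mp hC).2
  obtain ⟨hcyc1, hwts1, hc01⟩ := zero_out hCmem hq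
  have hc0u : c0 (u * diagOne q (-(cycWt u C))) = c0 u + 1 := hc01 ha
  have hiden : (u * diagOne q (-(cycWt u C))) * v
      = diagOne (u.perm q) (-(cycWt u C)) * (u * v) := by
    rw [diag_conj, mul_assoc]
  have hA := htight_c0 htight
  have hB1 : c0 u + 1 + c0 v ≤ n + c0 (diagOne (u.perm q) (-(cycWt u C)) * (u * v)) := by
    have := c0_mul (u * diagOne q (-(cycWt u C))) v
    rw [hiden, hc0u] at this
    exact this
  have hrec : diagOne (u.perm q) (cycWt u C)
      * (diagOne (u.perm q) (-(cycWt u C)) * (u * v)) = u * v := by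
    rw [← mul_assoc, diagOne_mul_diagOne, add_neg_cancel, diagOne_zero, one_mul]
  have hB2 : c0 (diagOne (u.perm q) (cycWt u C) : GW m n)
      + c0 (diagOne (u.perm q) (-(cycWt u C)) * (u * v)) ≤ n + c0 (u * v) := by
    have := c0_mul (diagOne (u.perm q) (cycWt u C) : GW m n)
      (diagOne (u.perm q) (-(cycWt u C)) * (u * v))
    rw [hrec] at this
    exact this
  have hcd : c0 (diagOne (u.perm q) (cycWt u C) : GW m n) = n - 1 := c0_diagOne ha
  have hn1 : 1 ≤ n := one_le_n u q
  have hB : c0 (diagOne (u.perm q) (-(cycWt u C)) * (u * v)) = c0 (u * v) + 1 := by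
    have h3 := c0_le (diagOne (u.perm q) (-(cycWt u C)) * (u * v))
    omega
  have hupd := update_c0 (x := u * v) (x' := diagOne (u.perm q) (-(cycWt u C)) * (u * v))
    (q := u.perm q) (c := -(cycWt u C)) (diagL_perm (u * v) _ _) (diagL_wt (u * v) _ _)
  rw [hB] at hupd
  split_ifs at hupd with e1 e2 e3
  · omega
  · omega
  · linear_combination e3
  · omega

lemma tight_inj_pair {u v : GW m n} (htight : codimfix u + codimfix v = codimfix (u * v))
    {C1 C2 : Finset (Fin n)} (hC1 : C1 ∈ nzCycles u) (hC2 : C2 ∈ nzCycles u) (hne : C2 ≠ C1)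
    {q1 q2 : Fin n} (hq1 : q1 ∈ C1) (hq2 : q2 ∈ C2)
    (heq : (u * v).cycleOf (u.perm q1) = (u * v).cycleOf (u.perm q2)) : False := by
  have hC1mem : C1 ∈ u.cycles := (mem_nz_iff.mp hC1).1
  have hC2mem : C2 ∈ u.cycles := (mem_nz_iff.mp hC2).1
  have ha1 : cycWt u C1 ≠ 0 := (mem_nz_iff.mp hC1).2
  have hX1 : cycWt (u * v) ((u * v).cycleOf (u.perm q1)) = cycWt u C1 := tight_wt htight hC1 hq1
  have hX2 : cycWt (u * v) ((u * v).cycleOf (u.perm q2)) = cycWt u C2 := tight_wt htight hC2 hq2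
  have haa : cycWt u C2 = cycWt u C1 := by rw [← hX1, ← hX2, heq]
  obtain ⟨hcyc1, hwts1, hc01⟩ := zero_out hC1mem hq1
  have hC2m1 : C2 ∈ (u * diagOne q1 (-(cycWt u C1))).cycles := by rw [hcyc1]; exact hC2mem
  have hwt2 : cycWt (u * diagOne q1 (-(cycWt u C1))) C2 = cycWt u C1 := by
    have h := hwts1 C2 hC2mem
    rw [if_neg hne] at h
    rw [h, haa]
  obtain ⟨hcyc2, hwts2, hc02⟩ := zero_out hC2m1 hq2
  have hprep : -(cycWt (u * diagOne q1 (-(cycWt u C1))) C2) = -(cycWt u C1) := by rw [hwt2]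
  rw [hprep] at hcyc2 hwts2 hc02
  have hc0u2 : c0 (u * diagOne q1 (-(cycWt u C1)) * diagOne q2 (-(cycWt u C1)))
      = c0 u + 2 := by
    rw [hc02 (by rw [hwt2]; exact ha1), hc01 ha1]
  have hiden : (u * diagOne q1 (-(cycWt u C1)) * diagOne q2 (-(cycWt u C1))) * v
      = diagOne (u.perm q2) (-(cycWt u C1))
        * (diagOne (u.perm q1) (-(cycWt u C1)) * (u * v)) := by
    have e1 : u * diagOne q1 (-(cycWt u C1)) * diagOne q2 (-(cycWt u C1))
        = diagOne (u.perm q2) (-(cycWt u C1)) * (u * diagOne q1 (-(cycWt u C1))) := by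
      have h := diag_conj (u * diagOne q1 (-(cycWt u C1))) q2 (-(cycWt u C1))
      rw [show (u * diagOne q1 (-(cycWt u C1))).perm q2 = u.perm q2 from by simp] at h
      exact h
    rw [e1, diag_conj]
    group
  have hA := htight_c0 htight
  have hlow : c0 u + 2 + c0 v ≤ n
      + c0 (diagOne (u.perm q2) (-(cycWt u C1))
        * (diagOne (u.perm q1) (-(cycWt u C1)) * (u * v))) := by
    have := c0_mul (u * diagOne q1 (-(cycWt u C1)) * diagOne q2 (-(cycWt u C1))) v
    rw [hiden, hc0u2] at this
    exact this
  have hupd1 := update_c0 (x := u * v)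
    (x' := diagOne (u.perm q1) (-(cycWt u C1)) * (u * v)) (q := u.perm q1)
    (c := -(cycWt u C1)) (diagL_perm (u * v) _ _) (diagL_wt (u * v) _ _)
  rw [hX1] at hupd1
  rw [if_neg ha1, if_pos (by ring)] at hupd1
  have hc0w1 : c0 (diagOne (u.perm q1) (-(cycWt u C1)) * (u * v)) = c0 (u * v) + 1 := by
    omega
  have hcycw1 : (diagOne (u.perm q1) (-(cycWt u C1)) * (u * v)).cycleOf (u.perm q2)
      = (u * v).cycleOf (u.perm q2) := cycleOf_congr (diagL_perm (u * v) _ _) _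
  have hwtW1 : cycWt (diagOne (u.perm q1) (-(cycWt u C1)) * (u * v))
      ((diagOne (u.perm q1) (-(cycWt u C1)) * (u * v)).cycleOf (u.perm q2)) = 0 := by
    rw [hcycw1, ← heq]
    have h := update_cycWt (x := u * v) (x' := diagOne (u.perm q1) (-(cycWt u C1)) * (u * v))
      (q := u.perm q1) (c := -(cycWt u C1)) (diagL_perm (u * v) _ _) (diagL_wt (u * v) _ _)
      ((u * v).cycleOf (u.perm q1)) (cycleOf_mem_cycles (u * v) _)
    rw [h, if_pos (self_mem_cycleOf (u * v) _), hX1]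
    ring
  have hupd2 := update_c0 (x := diagOne (u.perm q1) (-(cycWt u C1)) * (u * v))
    (x' := diagOne (u.perm q2) (-(cycWt u C1))
      * (diagOne (u.perm q1) (-(cycWt u C1)) * (u * v)))
    (q := u.perm q2) (c := -(cycWt u C1))
    (diagL_perm _ _ _) (diagL_wt _ _ _)
  rw [hwtW1] at hupd2
  rw [if_pos rfl, if_neg (show ¬((0 : ZMod m) + -(cycWt u C1) = 0) from
    fun hcon => ha1 (by linear_combination -hcon))] at hupd2
  rw [hc0w1] at hupd2
  omega

open Classical in
noncomputable def cycMap (u w : GW m n) : Finset (Fin n) → Finset (Fin n) :=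
  fun C => if h : C.Nonempty then w.cycleOf (u.perm (C.min' h)) else ∅

lemma tight_inj {u v : GW m n} (htight : codimfix u + codimfix v = codimfix (u * v)) :
    (∀ C ∈ nzCycles u, cycMap u (u * v) C ∈ (u * v).cycles ∧
      cycWt (u * v) (cycMap u (u * v) C) = cycWt u C) ∧
    Set.InjOn (cycMap u (u * v)) (nzCycles u) := by
  constructor
  · intro C hC
    have hCmem : C ∈ u.cycles := (mem_nz_iff.mp hC).1
    have hCne : C.Nonempty := cycles_nonempty hCmem
    unfold cycMap
    rw [dif_pos hCne]
    exact ⟨cycleOf_mem_cycles _ _, tight_wt htight hC (Finset.min'_mem C hCne)⟩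
  · intro C1 h1 C2 h2 hmapeq
    by_contra hne
    have h1' : C1 ∈ nzCycles u := h1
    have h2' : C2 ∈ nzCycles u := h2
    have hn1 : C1.Nonempty := cycles_nonempty (mem_nz_iff.mp h1').1
    have hn2 : C2.Nonempty := cycles_nonempty (mem_nz_iff.mp h2').1
    unfold cycMap at hmapeq
    rw [dif_pos hn1, dif_pos hn2] at hmapeq
    exact tight_inj_pair htight h1' h2' (Ne.symm hne) (Finset.min'_mem C1 hn1)
      (Finset.min'_mem C2 hn2) hmapeq

lemma nz_inv (x : GW m n) : nzCycles x⁻¹ = nzCycles x := by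
  unfold nzCycles
  rw [cycles_inv]
  apply Finset.filter_congr
  intro C hC
  rw [cycWt_inv hC]
  simp

open Classical in
lemma transfer {p : ℕ} {hpm : p ∣ m} {w x : GW m n}
    (hsub : ∀ S ⊆ GW.cycles w, ZMod.castHom hpm (ZMod p) (GW.partWt w S) = 0 →
      GW.PairedUp p hpm w S)
    (φ : Finset (Fin n) → Finset (Fin n))
    (hφ : ∀ C ∈ nzCycles x, φ C ∈ w.cycles ∧ cycWt w (φ C) = cycWt x C)
    (hinj : Set.InjOn φ (nzCycles x))
    (hcastTot : ZMod.castHom hpm (ZMod p) (wtTot x) = 0) :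
    ∃ π : Finset (Fin n) → Finset (Fin n), ∀ C ∈ nzCycles x, π C ∈ nzCycles x ∧ π (π C) = C ∧
      (π C = C → ZMod.castHom hpm (ZMod p) (cycWt x C) = 0) ∧
      (π C ≠ C → cycWt x C + cycWt x (π C) = 0) := by
  classical
  set S := (nzCycles x).image φ with hS
  have hSsub : S ⊆ w.cycles := by
    intro E hE
    obtain ⟨C, hC, rfl⟩ := Finset.mem_image.mp hE
    exact (hφ C hC).1
  have hinj' : ∀ a ∈ nzCycles x, ∀ b ∈ nzCycles x, φ a = φ b → a = b := fun a ha b hb h =>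
    hinj ha hb h
  have hSsum : partWt w S = wtTot x := by
    unfold partWt
    rw [hS, Finset.sum_image hinj']
    rw [Finset.sum_congr rfl (fun C hC => (hφ C hC).2)]
    exact sum_nzCycles x
  obtain ⟨πh, hinv, hfix, hpair⟩ := hsub S hSsub (by rw [hSsum]; exact hcastTot)
  have hmemS : ∀ C, C ∈ nzCycles x → φ C ∈ S := fun C hC => Finset.mem_image_of_mem φ hC
  have hpre : ∀ (E : {C // C ∈ S}), ∃ D, D ∈ nzCycles x ∧ φ D = E.1 := by
    intro E
    obtain ⟨D, hD, hDE⟩ := Finset.mem_image.mp E.2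
    exact ⟨D, hD, hDE⟩
  refine ⟨fun C => if h : C ∈ nzCycles x then
    Classical.choose (hpre (πh ⟨φ C, hmemS C h⟩)) else C, ?_⟩
  intro C hC
  have hspec := Classical.choose_spec (hpre (πh ⟨φ C, hmemS C hC⟩))
  set D := Classical.choose (hpre (πh ⟨φ C, hmemS C hC⟩)) with hD
  have hD1 : D ∈ nzCycles x := hspec.1
  have hD2 : φ D = (πh ⟨φ C, hmemS C hC⟩).1 := hspec.2
  have hdif : (fun C => if h : C ∈ nzCycles x then
      Classical.choose (hpre (πh ⟨φ C, hmemS C h⟩)) else C) C = D := dif_pos hC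
  rw [hdif]
  refine ⟨hD1, ?_, ?_, ?_⟩
  · have hdif2 : (fun C => if h : C ∈ nzCycles x then
        Classical.choose (hpre (πh ⟨φ C, hmemS C h⟩)) else C) D
        = Classical.choose (hpre (πh ⟨φ D, hmemS D hD1⟩)) := dif_pos hD1
    rw [hdif2]
    have hsub2 : (⟨φ D, hmemS D hD1⟩ : {C // C ∈ S}) = πh ⟨φ C, hmemS C hC⟩ :=
      Subtype.ext hD2
    have hspec2 := Classical.choose_spec (hpre (πh ⟨φ D, hmemS D hD1⟩))
    apply hinj' _ hspec2.1 _ hC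
    rw [hspec2.2, hsub2, hinv ⟨φ C, hmemS C hC⟩]
  · intro hDC
    have hfixed : πh ⟨φ C, hmemS C hC⟩ = ⟨φ C, hmemS C hC⟩ := by
      apply Subtype.ext
      rw [← hD2, hDC]
    have := hfix _ hfixed
    rw [(hφ C hC).2] at this
    exact this
  · intro hDC
    have hmoved : πh ⟨φ C, hmemS C hC⟩ ≠ ⟨φ C, hmemS C hC⟩ := by
      intro hcon
      apply hDC
      apply hinj' _ hD1 _ hC
      rw [hD2, hcon]
    have := hpair _ hmoved
    rw [(hφ C hC).2] at this
    rw [← hD2] at this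
    rw [(hφ D hD1).2] at this
    exact this

/-- For `x` admitting a weight-matching injection into the cycles of `w`, and `w`
satisfying the pairing hypothesis, the reflection length of `x` equals `codimfix x`. -/
lemma lR_eq_of_inj {p : ℕ} {hpm : p ∣ m} {w x : GW m n}
    (hsub : ∀ S ⊆ GW.cycles w, ZMod.castHom hpm (ZMod p) (GW.partWt w S) = 0 →
      GW.PairedUp p hpm w S)
    (φ : Finset (Fin n) → Finset (Fin n))
    (hφ : ∀ C ∈ nzCycles x, φ C ∈ w.cycles ∧ cycWt w (φ C) = cycWt x C)
    (hinj : Set.InjOn φ (nzCycles x))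
    (hcastTot : ZMod.castHom hpm (ZMod p) (wtTot x) = 0) :
    lR p hpm x = codimfix x := by
  obtain ⟨π, hπ⟩ := transfer hsub φ hφ hinj hcastTot
  exact upper x π hπ


end GW

/-- If `w ∈ G(m,p,n)` satisfies `ℓ_R(w) = codimfix(w)`, and every subset of the cycles
of `w` whose weights sum to `0 (mod p)` can be partitioned into singletons of weight
`0 (mod p)` and pairs of cycles whose weights sum to `0` in `ℤ/mℤ`, then
`[id, w]_{ℓ_R} = [id, w]_{cdf}`. -/
theorem stmt11 (m p n : ℕ) (hm : 0 < m) (hp : 0 < p) (hn : 0 < n) (hpm : p ∣ m)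
    (w : GW m n) (hw : GW.Gmem p hpm w)
    (heq : GW.lR p hpm w = GW.codimfix w)
    (hsub : ∀ S ⊆ GW.cycles w, ZMod.castHom hpm (ZMod p) (GW.partWt w S) = 0 →
      GW.PairedUp p hpm w S) :
    GW.interval p hpm (GW.lR p hpm) w = GW.interval p hpm GW.codimfix w := by

  ext u
  unfold GW.interval GW.leF
  simp only [Set.mem_setOf_eq]
  constructor
  · rintro ⟨hu, hleF⟩
    refine ⟨hu, ?_⟩
    have hv : GW.Gmem p hpm (u⁻¹ * w) := GW.Gmem_mul (GW.Gmem_inv hu) hw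
    have h1 : GW.codimfix u ≤ GW.lR p hpm u := by
      obtain ⟨l, hl, hprod⟩ := GW.gen u hu
      exact GW.codimfix_le_lR ⟨l, hl, hprod⟩
    have h2 : GW.codimfix (u⁻¹ * w) ≤ GW.lR p hpm (u⁻¹ * w) := by
      obtain ⟨l, hl, hprod⟩ := GW.gen (u⁻¹ * w) hv
      exact GW.codimfix_le_lR ⟨l, hl, hprod⟩
    have h3 : GW.codimfix w ≤ GW.codimfix u + GW.codimfix (u⁻¹ * w) := by
      have h := GW.codimfix_mul_le u (u⁻¹ * w)
      rw [show u * (u⁻¹ * w) = w from by group] at h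
      exact h
    omega
  · rintro ⟨hu, htight⟩
    refine ⟨hu, ?_⟩
    have hv : GW.Gmem p hpm (u⁻¹ * w) := GW.Gmem_mul (GW.Gmem_inv hu) hw
    have hwid : u * (u⁻¹ * w) = w := by group
    have htight' : GW.codimfix u + GW.codimfix (u⁻¹ * w) = GW.codimfix (u * (u⁻¹ * w)) := by
      rw [hwid]; exact htight
    obtain ⟨hφ, hφinj⟩ := GW.tight_inj htight'
    rw [hwid] at hφ hφinj
    have hlRu : GW.lR p hpm u = GW.codimfix u :=
      GW.lR_eq_of_inj hsub _ hφ hφinj hu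
    -- the other factor
    have hww : (u⁻¹ * w)⁻¹ * u⁻¹ = w⁻¹ := by group
    have htightv : GW.codimfix ((u⁻¹ * w)⁻¹) + GW.codimfix u⁻¹
        = GW.codimfix ((u⁻¹ * w)⁻¹ * u⁻¹) := by
      rw [GW.codimfix_inv, GW.codimfix_inv, hww, GW.codimfix_inv]
      omega
    obtain ⟨hφ2, hφinj2⟩ := GW.tight_inj htightv
    rw [hww] at hφ2 hφinj2
    rw [GW.nz_inv] at hφinj2
    have hφ2' : ∀ C ∈ GW.nzCycles (u⁻¹ * w),
        GW.cycMap ((u⁻¹ * w)⁻¹) w⁻¹ C ∈ w.cycles ∧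
        GW.cycWt w (GW.cycMap ((u⁻¹ * w)⁻¹) w⁻¹ C) = GW.cycWt (u⁻¹ * w) C := by
      intro C hC
      have hCinv : C ∈ GW.nzCycles ((u⁻¹ * w)⁻¹) := by rw [GW.nz_inv]; exact hC
      obtain ⟨hmem, hwt⟩ := hφ2 C hCinv
      have hmem' : GW.cycMap ((u⁻¹ * w)⁻¹) w⁻¹ C ∈ w.cycles := by
        rw [← GW.cycles_inv w]; exact hmem
      have h1 := GW.cycWt_inv hmem'
      have hCm : C ∈ (u⁻¹ * w).cycles := (GW.mem_nz_iff.mp hC).1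
      have h2 := GW.cycWt_inv hCm
      rw [h1, h2] at hwt
      exact ⟨hmem', by linear_combination -hwt⟩
    have hlRv : GW.lR p hpm (u⁻¹ * w) = GW.codimfix (u⁻¹ * w) :=
      GW.lR_eq_of_inj hsub _ hφ2' hφinj2 hv
    rw [hlRu, hlRv, heq]
    exact htight
end

section
/- Let W ⊆ GL(V) be a finite complex reflection group and w ∈ W. Then the following two conditions are equivalent: (j) [id, u]_{ℓ_R} = [id, u]_{cdf} for every u with u ≤_{cdf} w and u ≠ w; (k) ℓ_R(u) = codimfix(u) for every u with u ≤_{cdf} w and u ≠ w. -/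
namespace CRG

variable {V : Type*} [AddCommGroup V] [Module ℂ V] [FiniteDimensional ℂ V]

/-- The codimension of the fixed space of an invertible linear map `g` on `V`:
`codimfix g = dim V − dim ker(g − 1)`. -/
noncomputable def cdf (g : (V →ₗ[ℂ] V)ˣ) : ℕ :=
  Module.finrank ℂ V - Module.finrank ℂ (LinearMap.ker ((g : V →ₗ[ℂ] V) - LinearMap.id))

/-- `t` is a reflection of the group `W ⊆ GL(V)`: an element of `W` whose fixed space has
codimension 1. -/
def IsRefl (W : Subgroup (V →ₗ[ℂ] V)ˣ) (t : (V →ₗ[ℂ] V)ˣ) : Prop :=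
  t ∈ W ∧ cdf t = 1

/-- The reflection length of `w`: the least `k` such that `w` is a product of `k`
reflections of `W`. -/
noncomputable def lR (W : Subgroup (V →ₗ[ℂ] V)ˣ) (w : (V →ₗ[ℂ] V)ˣ) : ℕ :=
  sInf {k | ∃ l : List (V →ₗ[ℂ] V)ˣ, (∀ t ∈ l, IsRefl W t) ∧ l.length = k ∧ l.prod = w}

/-- The order `≤_f` determined by a subadditive function `f`:
`x ≤_f y ↔ f x + f (x⁻¹y) = f y`. -/
def leF (f : (V →ₗ[ℂ] V)ˣ → ℕ) (x y : (V →ₗ[ℂ] V)ˣ) : Prop :=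
  f x + f (x⁻¹ * y) = f y

/-- The interval `[id, w]_f` inside the poset `(W, ≤_f)`. -/
def interval (W : Subgroup (V →ₗ[ℂ] V)ˣ) (f : (V →ₗ[ℂ] V)ˣ → ℕ) (w : (V →ₗ[ℂ] V)ˣ) :
    Set (V →ₗ[ℂ] V)ˣ :=
  {u | u ∈ W ∧ leF f u w}

end CRG

open CRG

set_option linter.unusedSectionVars false
set_option linter.unusedVariables false

namespace CRG

variable {V : Type*} [AddCommGroup V] [Module ℂ V] [FiniteDimensional ℂ V]

lemma mem_fixker {g : (V →ₗ[ℂ] V)ˣ} {x : V} :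
    x ∈ LinearMap.ker ((g : V →ₗ[ℂ] V) - LinearMap.id) ↔ (g : V →ₗ[ℂ] V) x = x := by
  rw [LinearMap.mem_ker, LinearMap.sub_apply, LinearMap.id_apply, sub_eq_zero]

lemma unit_apply_inv_apply (g : (V →ₗ[ℂ] V)ˣ) (x : V) :
    (g : V →ₗ[ℂ] V) ((↑g⁻¹ : V →ₗ[ℂ] V) x) = x := by
  rw [← Module.End.mul_apply, g.mul_inv, Module.End.one_apply]

lemma unit_inv_apply_apply (g : (V →ₗ[ℂ] V)ˣ) (x : V) :
    (↑g⁻¹ : V →ₗ[ℂ] V) ((g : V →ₗ[ℂ] V) x) = x := by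
  rw [← Module.End.mul_apply, g.inv_mul, Module.End.one_apply]

lemma fixker_le (g : (V →ₗ[ℂ] V)ˣ) :
    Module.finrank ℂ (LinearMap.ker ((g : V →ₗ[ℂ] V) - LinearMap.id)) ≤ Module.finrank ℂ V :=
  Submodule.finrank_le _

lemma cdf_one : cdf (1 : (V →ₗ[ℂ] V)ˣ) = 0 := by
  have h : LinearMap.ker (((1 : (V →ₗ[ℂ] V)ˣ) : V →ₗ[ℂ] V) - LinearMap.id) = ⊤ := by
    ext x
    rw [mem_fixker]
    simp
  unfold cdf
  rw [h]
  simp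

lemma cdf_eq_zero_iff {g : (V →ₗ[ℂ] V)ˣ} : cdf g = 0 ↔ g = 1 := by
  constructor
  · intro h
    have hle := fixker_le g
    have heq : Module.finrank ℂ (LinearMap.ker ((g : V →ₗ[ℂ] V) - LinearMap.id))
        = Module.finrank ℂ V := by
      unfold cdf at h; omega
    have htop := Submodule.eq_top_of_finrank_eq heq
    have hid : (g : V →ₗ[ℂ] V) = LinearMap.id := by
      ext x
      have hx : x ∈ LinearMap.ker ((g : V →ₗ[ℂ] V) - LinearMap.id) :=
        htop ▸ Submodule.mem_top
      exact mem_fixker.mp hx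
    ext x
    rw [hid]
    rfl
  · rintro rfl; exact cdf_one

lemma cdf_inv (g : (V →ₗ[ℂ] V)ˣ) : cdf g⁻¹ = cdf g := by
  have hker : LinearMap.ker ((↑g⁻¹ : V →ₗ[ℂ] V) - LinearMap.id)
      = LinearMap.ker ((g : V →ₗ[ℂ] V) - LinearMap.id) := by
    ext x
    rw [mem_fixker, mem_fixker]
    constructor
    · intro h
      conv_lhs => rw [← h]
      exact unit_apply_inv_apply g x
    · intro h
      conv_lhs => rw [← h]
      exact unit_inv_apply_apply g x
  unfold cdf; rw [hker]

lemma cdf_mul_le (a b : (V →ₗ[ℂ] V)ˣ) : cdf (a * b) ≤ cdf a + cdf b := by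
  have hsub : LinearMap.ker ((a : V →ₗ[ℂ] V) - LinearMap.id)
      ⊓ LinearMap.ker ((b : V →ₗ[ℂ] V) - LinearMap.id)
      ≤ LinearMap.ker ((↑(a * b) : V →ₗ[ℂ] V) - LinearMap.id) := by
    intro x hx
    rw [Submodule.mem_inf] at hx
    obtain ⟨hxa, hxb⟩ := hx
    rw [mem_fixker] at hxa hxb ⊢
    rw [Units.val_mul, Module.End.mul_apply, hxb, hxa]
  have h1 := Submodule.finrank_mono hsub
  have h2 := Submodule.finrank_sup_add_finrank_inf_eq
    (LinearMap.ker ((a : V →ₗ[ℂ] V) - LinearMap.id))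
    (LinearMap.ker ((b : V →ₗ[ℂ] V) - LinearMap.id))
  have h3 : Module.finrank ℂ ((LinearMap.ker ((a : V →ₗ[ℂ] V) - LinearMap.id)
      ⊔ LinearMap.ker ((b : V →ₗ[ℂ] V) - LinearMap.id) : Submodule ℂ V))
      ≤ Module.finrank ℂ V := Submodule.finrank_le _
  have h4 := fixker_le a
  have h5 := fixker_le b
  have h6 := fixker_le (a * b)
  unfold cdf
  omega

/-- The linear equivalence underlying a unit of `End`. -/
noncomputable def toEquiv (g : (V →ₗ[ℂ] V)ˣ) : V ≃ₗ[ℂ] V :=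
  LinearEquiv.ofLinear (g : V →ₗ[ℂ] V) (↑g⁻¹ : V →ₗ[ℂ] V)
    (by
      rw [← Module.End.mul_eq_comp, g.mul_inv]
      rfl)
    (by
      rw [← Module.End.mul_eq_comp, g.inv_mul]
      rfl)

lemma cdf_conj (g a : (V →ₗ[ℂ] V)ˣ) : cdf (g⁻¹ * a * g) = cdf a := by
  have hker : LinearMap.ker ((↑(g⁻¹ * a * g) : V →ₗ[ℂ] V) - LinearMap.id)
      = Submodule.comap (toEquiv g : V →ₗ[ℂ] V)
          (LinearMap.ker ((a : V →ₗ[ℂ] V) - LinearMap.id)) := by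
    ext x
    rw [mem_fixker, Submodule.mem_comap, mem_fixker]
    have happ : (↑(g⁻¹ * a * g) : V →ₗ[ℂ] V) x
        = (↑g⁻¹ : V →ₗ[ℂ] V) ((a : V →ₗ[ℂ] V) ((g : V →ₗ[ℂ] V) x)) := by
      rw [Units.val_mul, Units.val_mul, Module.End.mul_apply, Module.End.mul_apply]
    have hte : (toEquiv g : V →ₗ[ℂ] V) x = (g : V →ₗ[ℂ] V) x := rfl
    rw [happ, hte]
    constructor
    · intro h
      have := congrArg (g : V →ₗ[ℂ] V) h
      rwa [unit_apply_inv_apply] at this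
    · intro h
      rw [h]
      exact unit_inv_apply_apply g x
  unfold cdf
  rw [hker, Submodule.comap_equiv_eq_map_symm, LinearEquiv.finrank_map_eq]

variable {W : Subgroup (V →ₗ[ℂ] V)ˣ}

lemma isRefl_inv {t : (V →ₗ[ℂ] V)ˣ} (h : IsRefl W t) : IsRefl W t⁻¹ :=
  ⟨inv_mem h.1, by rw [cdf_inv]; exact h.2⟩

lemma exists_word (hgen : Subgroup.closure {t | CRG.IsRefl W t} = W)
    {u : (V →ₗ[ℂ] V)ˣ} (hu : u ∈ W) :
    ∃ l : List (V →ₗ[ℂ] V)ˣ, (∀ t ∈ l, IsRefl W t) ∧ l.prod = u := by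
  rw [← hgen] at hu
  induction hu using Subgroup.closure_induction with
  | mem t ht => exact ⟨[t], by simpa using ht, by simp⟩
  | one => exact ⟨[], by simp, by simp⟩
  | mul a b _ _ iha ihb =>
    obtain ⟨la, hla, hpa⟩ := iha
    obtain ⟨lb, hlb, hpb⟩ := ihb
    refine ⟨la ++ lb, ?_, ?_⟩
    · intro t ht
      rcases List.mem_append.1 ht with h | h
      · exact hla t h
      · exact hlb t h
    · simp [hpa, hpb]
  | inv a _ iha =>
    obtain ⟨la, hla, hpa⟩ := iha
    refine ⟨(la.map (·⁻¹)).reverse, ?_, ?_⟩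
    · intro t ht
      simp only [List.mem_reverse, List.mem_map] at ht
      obtain ⟨s, hs, rfl⟩ := ht
      exact isRefl_inv (hla s hs)
    · rw [List.prod_reverse_noncomm, List.map_map]
      have hmap : (la.map ((·⁻¹) ∘ (·⁻¹))) = la := by
        simp [Function.comp_def]
      rw [hmap, hpa]

lemma lR_spec (hgen : Subgroup.closure {t | CRG.IsRefl W t} = W)
    {u : (V →ₗ[ℂ] V)ˣ} (hu : u ∈ W) :
    ∃ l : List (V →ₗ[ℂ] V)ˣ, (∀ t ∈ l, IsRefl W t) ∧ l.length = lR W u ∧ l.prod = u := by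
  have hne : {k | ∃ l : List (V →ₗ[ℂ] V)ˣ,
      (∀ t ∈ l, IsRefl W t) ∧ l.length = k ∧ l.prod = u}.Nonempty := by
    obtain ⟨l, h1, h2⟩ := exists_word hgen hu
    exact ⟨l.length, l, h1, rfl, h2⟩
  exact Nat.sInf_mem hne

lemma lR_le {u : (V →ₗ[ℂ] V)ˣ} {l : List (V →ₗ[ℂ] V)ˣ}
    (hl : ∀ t ∈ l, IsRefl W t) (hp : l.prod = u) : lR W u ≤ l.length :=
  Nat.sInf_le ⟨l, hl, rfl, hp⟩

lemma cdf_prod_le {l : List (V →ₗ[ℂ] V)ˣ} (hl : ∀ t ∈ l, IsRefl W t) :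
    cdf l.prod ≤ l.length := by
  induction l with
  | nil => simp [cdf_one]
  | cons t l ih =>
    have h1 := cdf_mul_le t l.prod
    have h2 := (hl t (by simp)).2
    have h3 := ih (fun s hs => hl s (List.mem_cons_of_mem _ hs))
    simp only [List.prod_cons, List.length_cons]
    omega

lemma cdf_le_lR (hgen : Subgroup.closure {t | CRG.IsRefl W t} = W)
    {u : (V →ₗ[ℂ] V)ˣ} (hu : u ∈ W) : cdf u ≤ lR W u := by
  obtain ⟨l, h1, h2, h3⟩ := lR_spec hgen hu
  have h := cdf_prod_le h1
  rw [h3, h2] at h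
  exact h

lemma lR_one : lR W (1 : (V →ₗ[ℂ] V)ˣ) = 0 :=
  Nat.eq_zero_of_le_zero (lR_le (l := []) (by simp) (by simp))

lemma leF_cdf_trans {a b c : (V →ₗ[ℂ] V)ˣ} (hab : leF cdf a b) (hbc : leF cdf b c) :
    leF cdf a c := by
  unfold leF at *
  have h1 : cdf (a⁻¹ * c) ≤ cdf (a⁻¹ * b) + cdf (b⁻¹ * c) := by
    have := cdf_mul_le (a⁻¹ * b) (b⁻¹ * c)
    rwa [show a⁻¹ * b * (b⁻¹ * c) = a⁻¹ * c by group] at this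
  have h2 : cdf c ≤ cdf a + cdf (a⁻¹ * c) := by
    have := cdf_mul_le a (a⁻¹ * c)
    rwa [show a * (a⁻¹ * c) = c by group] at this
  omega

lemma leF_cdf_compl {x u : (V →ₗ[ℂ] V)ˣ} (hxu : leF cdf x u) : leF cdf (x⁻¹ * u) u := by
  unfold leF at *
  rw [show (x⁻¹ * u)⁻¹ * u = u⁻¹ * x * u by group, cdf_conj u x]
  omega

end CRG


/-- In a finite complex reflection group `W ⊆ GL(V)`, for `w ∈ W` the following two
conditions are equivalent:
(j) `[id, u]_{ℓ_R} = [id, u]_{cdf}` for every `u <_{cdf} w`;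
(k) `ℓ_R(u) = codimfix(u)` for every `u <_{cdf} w`. -/
theorem stmt14 {V : Type*} [AddCommGroup V] [Module ℂ V] [FiniteDimensional ℂ V]
    (W : Subgroup (V →ₗ[ℂ] V)ˣ) (hfin : Finite W)
    (hgen : Subgroup.closure {t | CRG.IsRefl W t} = W)
    (w : (V →ₗ[ℂ] V)ˣ) (hw : w ∈ W) :
    (∀ u : (V →ₗ[ℂ] V)ˣ, u ∈ W → leF cdf u w → u ≠ w →
        interval W (lR W) u = interval W cdf u) ↔
    (∀ u : (V →ₗ[ℂ] V)ˣ, u ∈ W → leF cdf u w → u ≠ w → lR W u = cdf u) := by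
  constructor
  · -- (j) → (k)
    intro hJ
    suffices H : ∀ n, ∀ u : (V →ₗ[ℂ] V)ˣ, u ∈ W → leF cdf u w → u ≠ w → cdf u ≤ n →
        lR W u = cdf u by
      intro u hu huw hne
      exact H (cdf u) u hu huw hne le_rfl
    intro n
    induction n with
    | zero =>
      intro u hu huw hne hle
      obtain rfl := cdf_eq_zero_iff.mp (Nat.le_zero.mp hle)
      rw [lR_one, cdf_one]
    | succ n ih =>
      intro u hu huw hne hle
      by_cases h0 : cdf u = 0
      · obtain rfl := cdf_eq_zero_iff.mp h0
        rw [lR_one, cdf_one]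
      · obtain ⟨l, hl, hlen, hprod⟩ := lR_spec hgen hu
        have hcu_le_lR : cdf u ≤ lR W u := cdf_le_lR hgen hu
        have hlRpos : 0 < lR W u :=
          lt_of_lt_of_le (Nat.pos_of_ne_zero h0) hcu_le_lR
        cases l with
        | nil =>
          rw [List.length_nil] at hlen
          omega
        | cons t l' =>
          have ht : IsRefl W t := hl t List.mem_cons_self
          have hl' : ∀ s ∈ l', IsRefl W s := fun s hs => hl s (List.mem_cons_of_mem _ hs)
          have hv : l'.prod = t⁻¹ * u := by
            rw [← hprod, List.prod_cons]
            group
          have hvW : t⁻¹ * u ∈ W := mul_mem (inv_mem ht.1) hu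
          have hltR : lR W t = 1 := by
            have h1 : lR W t ≤ 1 := lR_le (l := [t]) (by simpa using ht) (by simp)
            have h2 := cdf_le_lR hgen ht.1
            rw [ht.2] at h2
            omega
          have hA : lR W (t⁻¹ * u) ≤ l'.length := lR_le hl' hv
          have hlen' : l'.length + 1 = lR W u := by
            rw [← hlen, List.length_cons]
          have hB : lR W u ≤ 1 + lR W (t⁻¹ * u) := by
            obtain ⟨m, hm, hmlen, hmprod⟩ := lR_spec hgen hvW
            have hmp : (t :: m).prod = u := by
              rw [List.prod_cons, hmprod]
              group
            have hmref : ∀ s ∈ t :: m, IsRefl W s := by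
              intro s hs
              rcases List.mem_cons.mp hs with rfl | hs'
              · exact ht
              · exact hm s hs'
            have := lR_le hmref hmp
            rw [List.length_cons, hmlen] at this
            omega
          have hleFt : leF (lR W) t u := by
            unfold leF
            rw [hltR]
            omega
          have hint := hJ u hu huw hne
          have htmem : t ∈ interval W (lR W) u := ⟨ht.1, hleFt⟩
          rw [hint] at htmem
          have hcd : leF cdf t u := htmem.2
          have hvu : leF cdf (t⁻¹ * u) u := leF_cdf_compl hcd
          have hvw : leF cdf (t⁻¹ * u) w := leF_cdf_trans hvu huw
          have hcdt : cdf t = 1 := ht.2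
          unfold leF at hcd huw
          have hvne : t⁻¹ * u ≠ w := by
            intro he
            rw [he] at hcd
            omega
          have hvlt : cdf (t⁻¹ * u) ≤ n := by omega
          have hIH := ih (t⁻¹ * u) hvW hvw hvne hvlt
          omega
  · -- (k) → (j)
    intro hK u hu huw hne
    ext x
    simp only [interval, Set.mem_setOf_eq]
    constructor
    · rintro ⟨hxW, hxl⟩
      refine ⟨hxW, ?_⟩
      have hxinv : x⁻¹ * u ∈ W := mul_mem (inv_mem hxW) hu
      have h1 : cdf x ≤ lR W x := cdf_le_lR hgen hxW
      have h2 : cdf (x⁻¹ * u) ≤ lR W (x⁻¹ * u) := cdf_le_lR hgen hxinv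
      have h3 : lR W u = cdf u := hK u hu huw hne
      have h4 : cdf u ≤ cdf x + cdf (x⁻¹ * u) := by
        have := cdf_mul_le x (x⁻¹ * u)
        rwa [show x * (x⁻¹ * u) = u by group] at this
      unfold leF at hxl ⊢
      omega
    · rintro ⟨hxW, hxc⟩
      refine ⟨hxW, ?_⟩
      have hxw : leF cdf x w := leF_cdf_trans hxc huw
      have hyu : leF cdf (x⁻¹ * u) u := leF_cdf_compl hxc
      have hyw : leF cdf (x⁻¹ * u) w := leF_cdf_trans hyu huw
      have hyW : x⁻¹ * u ∈ W := mul_mem (inv_mem hxW) hu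
      have hxne : x ≠ w := by
        intro he
        apply hne
        unfold leF at hxc huw
        rw [he] at hxc
        have h0 : cdf (u⁻¹ * w) = 0 := by omega
        exact inv_mul_eq_one.mp (cdf_eq_zero_iff.mp h0)
      have hyne : x⁻¹ * u ≠ w := by
        intro he
        apply hne
        unfold leF at hxc huw
        rw [he] at hxc
        have h0 : cdf (u⁻¹ * w) = 0 := by omega
        exact inv_mul_eq_one.mp (cdf_eq_zero_iff.mp h0)
      have e1 : lR W x = cdf x := hK x hxW hxw hxne
      have e2 : lR W (x⁻¹ * u) = cdf (x⁻¹ * u) := hK (x⁻¹ * u) hyW hyw hyne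
      have e3 : lR W u = cdf u := hK u hu huw hne
      unfold leF at hxc ⊢
      rw [e1, e2, e3]
      exact hxc
end
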